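/- arXiv:0708.1259 — 3 statements merged into one kernel-verified Lean document; each statement's English description precedes it below -/
import Mathlib

section
/- For any integer λ, the q-series identity p(λ; x) = p(x) · S_λ(p̄)(x) holds in ℚ(q)[[x]], where p(λ;x) = ∑_{k≥0}[λ,k]x^k, p(x) = ∑_{k≥0}[∞,k]x^k with [∞,k] = 1/∏_{i=1}^k(1-q^i), p̄(x) is p with q replaced by q^{-1}, and S_λ multiplies the coefficient of x^k by q^{λk}. -/
open PowerSeries

/-- `K = ℚ(q)`, the field of rational functions in q over ℚ. -/
noncomputable abbrev K := RatFunc ℚ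

/-- The variable q of ℚ(q). -/
noncomputable abbrev q : K := RatFunc.X

/-- The q-binomial type coefficient `[n,k] = (∏_{i=1}^k (1-q^{n+i}))/(∏_{i=1}^k (1-q^i))`. -/
noncomputable def qBinom (n : ℤ) (k : ℕ) : K :=
  (∏ i ∈ Finset.Icc 1 k, (1 - q ^ (n + (i : ℤ)))) / (∏ i ∈ Finset.Icc 1 k, (1 - q ^ (i : ℤ)))

lemma q_ne_zero : (q : K) ≠ 0 := RatFunc.X_ne_zero

lemma q_pow_ne_one {k : ℕ} (hk : k ≠ 0) : (q : K) ^ k ≠ 1 := by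
  intro h
  have h2 : (Polynomial.X : Polynomial ℚ) ^ k = 1 := by
    apply IsFractionRing.injective (Polynomial ℚ) K
    simpa [map_pow, RatFunc.algebraMap_X] using h
  have h3 := congrArg Polynomial.natDegree h2
  simp [Polynomial.natDegree_X_pow] at h3
  exact hk h3

lemma one_sub_q_pow_ne_zero {k : ℕ} (hk : k ≠ 0) : (1 : K) - q ^ (k : ℤ) ≠ 0 := by
  rw [zpow_natCast, sub_ne_zero]
  exact fun h => q_pow_ne_one hk h.symm

lemma one_sub_q_zpow_neg_ne_zero {k : ℕ} (hk : k ≠ 0) : (1 : K) - q ^ (-(k : ℤ)) ≠ 0 := by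
  rw [zpow_neg, zpow_natCast, sub_ne_zero]
  intro h
  exact q_pow_ne_one hk (inv_eq_one.mp h.symm)

lemma prod_pos_ne_zero (k : ℕ) : (∏ i ∈ Finset.Icc 1 k, ((1 : K) - q ^ (i : ℤ))) ≠ 0 := by
  apply Finset.prod_ne_zero_iff.mpr
  intro i hi
  have : i ≠ 0 := by simp at hi; omega
  exact one_sub_q_pow_ne_zero this

lemma prod_neg_ne_zero (k : ℕ) : (∏ i ∈ Finset.Icc 1 k, ((1 : K) - q ^ (-(i : ℤ)))) ≠ 0 := by
  apply Finset.prod_ne_zero_iff.mpr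
  intro i hi
  have : i ≠ 0 := by simp at hi; omega
  exact one_sub_q_zpow_neg_ne_zero this

/-- coefficients of `p` -/
noncomputable def Ac (k : ℕ) : K := (∏ i ∈ Finset.Icc 1 k, (1 - q ^ (i : ℤ)))⁻¹

/-- coefficients of `S_λ p̄` -/
noncomputable def Bc (l : ℤ) (k : ℕ) : K :=
  q ^ (l * (k : ℤ)) * (∏ i ∈ Finset.Icc 1 k, (1 - q ^ (-(i : ℤ))))⁻¹

lemma A_rec (k : ℕ) : (1 - q ^ ((k + 1 : ℕ) : ℤ)) * Ac (k + 1) = Ac k := by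
  unfold Ac
  rw [Finset.prod_Icc_succ_top (Nat.le_add_left 1 k)]
  rw [mul_inv, mul_comm ((∏ i ∈ Finset.Icc 1 k, (1 - q ^ (i : ℤ))))⁻¹, ← mul_assoc,
    mul_inv_cancel₀ (one_sub_q_pow_ne_zero (Nat.succ_ne_zero k)), one_mul]

lemma B_rec (l : ℤ) (k : ℕ) :
    (1 - q ^ ((k + 1 : ℕ) : ℤ)) * Bc l (k + 1) = -(q ^ (l + (k + 1 : ℕ))) * Bc l k := by
  unfold Bc
  rw [Finset.prod_Icc_succ_top (Nat.le_add_left 1 k)]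
  have h1 := prod_neg_ne_zero k
  have h2 : (1 : K) - q ^ (-((k + 1 : ℕ) : ℤ)) ≠ 0 :=
    one_sub_q_zpow_neg_ne_zero (Nat.succ_ne_zero k)
  have hprod : (q : K) ^ ((k + 1 : ℕ) : ℤ) * q ^ (-((k + 1 : ℕ) : ℤ)) = 1 := by
    rw [← zpow_add₀ q_ne_zero, add_neg_cancel, zpow_zero]
  have key : (1 : K) - q ^ ((k + 1 : ℕ) : ℤ)
      = -(q ^ ((k + 1 : ℕ) : ℤ)) * (1 - q ^ (-((k + 1 : ℕ) : ℤ))) := by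
    linear_combination -hprod
  have hz1 : (q : K) ^ (l * ((k + 1 : ℕ) : ℤ)) = q ^ (l * (k : ℤ)) * q ^ l := by
    rw [← zpow_add₀ q_ne_zero]; congr 1; push_cast; ring
  have hz2 : (q : K) ^ (l + ((k + 1 : ℕ) : ℤ)) = q ^ l * q ^ ((k + 1 : ℕ) : ℤ) := by
    rw [← zpow_add₀ q_ne_zero]
  rw [hz1, hz2, mul_inv, key]
  have he := mul_inv_cancel₀ h2
  linear_combination (-(q ^ ((k + 1 : ℕ) : ℤ)) * q ^ (l * (k : ℤ)) * q ^ l *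
    (∏ i ∈ Finset.Icc 1 k, (1 - q ^ (-(i : ℤ))))⁻¹) * he

lemma C_rec (l : ℤ) (k : ℕ) :
    (1 - q ^ ((k + 1 : ℕ) : ℤ)) * qBinom l (k + 1)
      = (1 - q ^ (l + (k + 1 : ℕ))) * qBinom l k := by
  unfold qBinom
  rw [Finset.prod_Icc_succ_top (Nat.le_add_left 1 k) (f := fun i => 1 - q ^ (l + (i : ℤ))),
    Finset.prod_Icc_succ_top (Nat.le_add_left 1 k) (f := fun i => 1 - q ^ ((i : ℤ)))]
  have h1 := prod_pos_ne_zero k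
  have h2 : (1 : K) - q ^ ((k + 1 : ℕ) : ℤ) ≠ 0 := one_sub_q_pow_ne_zero (Nat.succ_ne_zero k)
  rw [← mul_div_assoc, ← mul_div_assoc, div_eq_div_iff (mul_ne_zero h1 h2) h1]
  ring

/-- Uniqueness of solutions of the functional equation `(1-x)f(x) = (1-aq x)f(qx)`. -/
lemma fe_unique (a : K) (f g : PowerSeries K)
    (hf : (1 - X) * f = (1 - PowerSeries.C a * X) * rescale q f)
    (hg : (1 - X) * g = (1 - PowerSeries.C a * X) * rescale q g)
    (h0 : coeff 0 f = coeff 0 g) : f = g := by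
  ext n
  induction n with
  | zero => exact h0
  | succ k ih =>
    have ef := congrArg (coeff (k + 1)) hf
    have eg := congrArg (coeff (k + 1)) hg
    rw [sub_mul, one_mul, map_sub, coeff_succ_X_mul, sub_mul, one_mul, map_sub, mul_assoc,
      coeff_C_mul, coeff_succ_X_mul, coeff_rescale, coeff_rescale] at ef eg
    rw [ih] at ef
    have hz : (1 - q ^ (k + 1)) * (coeff (k + 1) f - coeff (k + 1) g) = 0 := by
      linear_combination ef - eg
    rcases mul_eq_zero.mp hz with h | h
    · exfalso
      have := one_sub_q_pow_ne_zero (Nat.succ_ne_zero k)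
      rw [zpow_natCast] at this
      exact this h
    · exact sub_eq_zero.mp h

/-- For any integer λ, `p(λ;x) = p(x) · S_λ(p̄)(x)` in ℚ(q)[[x]], where
`p(λ;x) = ∑_k [λ,k] x^k`, `p(x) = ∑_k x^k/∏_{i=1}^k(1-q^i)`, `p̄` is `p` with q replaced by
`q⁻¹`, and `S_λ` multiplies the coefficient of x^k by `q^{λk}`. -/
theorem p_lambda_eq_p_mul_S_p_bar (l : ℤ) :
    (PowerSeries.mk fun k => qBinom l k : PowerSeries K)
    = (PowerSeries.mk fun k => (∏ i ∈ Finset.Icc 1 k, (1 - q ^ (i : ℤ)))⁻¹) *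
      (PowerSeries.mk fun k =>
        q ^ (l * (k : ℤ)) * (∏ i ∈ Finset.Icc 1 k, (1 - q ^ (-(i : ℤ))))⁻¹) := by
  set P : PowerSeries K := PowerSeries.mk fun k => Ac k with hPdef
  set G : PowerSeries K := PowerSeries.mk fun k => Bc l k with hGdef
  set T : PowerSeries K := PowerSeries.mk fun k => qBinom l k with hTdef
  show T = P * G
  have hres : ∀ f : PowerSeries K, constantCoeff (rescale q f) = constantCoeff f := by
    intro f
    rw [← coeff_zero_eq_constantCoeff_apply, ← coeff_zero_eq_constantCoeff_apply, coeff_rescale]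
    simp
  have hP : (1 - X) * P = rescale q P := by
    ext n
    rcases n with _ | k
    · simp [hPdef]
    · rw [sub_mul, one_mul, map_sub, coeff_succ_X_mul, coeff_rescale]
      simp only [hPdef, coeff_mk]
      have h := A_rec k
      rw [zpow_natCast] at h
      linear_combination h
  have hG : (1 - PowerSeries.C (q ^ (l + 1)) * X) * rescale q G = G := by
    ext n
    rcases n with _ | k
    · simp [hGdef, hres]
    · rw [sub_mul, one_mul, map_sub, mul_assoc, coeff_C_mul, coeff_succ_X_mul,
        coeff_rescale, coeff_rescale]
      simp only [hGdef, coeff_mk]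
      have h := B_rec l k
      rw [zpow_natCast] at h
      have hz : (q : K) ^ (l + (k + 1 : ℕ)) = q ^ (l + 1) * q ^ k := by
        rw [← zpow_natCast q k, ← zpow_add₀ q_ne_zero]
        push_cast
        ring_nf
      rw [hz] at h
      linear_combination -h
  have hT : (1 - X) * T = (1 - PowerSeries.C (q ^ (l + 1)) * X) * rescale q T := by
    ext n
    rcases n with _ | k
    · simp [hTdef, hres]
    · rw [sub_mul, one_mul, map_sub, coeff_succ_X_mul, sub_mul, one_mul, map_sub, mul_assoc,
        coeff_C_mul, coeff_succ_X_mul, coeff_rescale, coeff_rescale]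
      simp only [hTdef, coeff_mk]
      have h := C_rec l k
      rw [zpow_natCast] at h
      have hz : (q : K) ^ (l + (k + 1 : ℕ)) = q ^ (l + 1) * q ^ k := by
        rw [← zpow_natCast q k, ← zpow_add₀ q_ne_zero]
        push_cast
        ring_nf
      rw [hz] at h
      linear_combination h
  have hF : (1 - X) * (P * G) = (1 - PowerSeries.C (q ^ (l + 1)) * X) * rescale q (P * G) := by
    calc (1 - X) * (P * G) = ((1 - X) * P) * G := by ring
    _ = rescale q P * G := by rw [hP]
    _ = rescale q P * ((1 - PowerSeries.C (q ^ (l + 1)) * X) * rescale q G) := by rw [hG]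
    _ = (1 - PowerSeries.C (q ^ (l + 1)) * X) * (rescale q P * rescale q G) := by ring
    _ = (1 - PowerSeries.C (q ^ (l + 1)) * X) * rescale q (P * G) := by rw [← map_mul]
  apply fe_unique (q ^ (l + 1)) T (P * G) hT hF
  have hPG : coeff 0 (P * G) = coeff 0 P * coeff 0 G := by
    simp [coeff_zero_eq_constantCoeff_apply]
  rw [hPG]
  simp [hPdef, hGdef, hTdef, qBinom, Ac, Bc]
end

section
/- Let f ∈ 1 + m and g ∈ R = ℚ(q)[[x]], and define elements g_d ∈ R for d ≥ 1 by the requirement ∑_{d|n} d·g_d = ψ_n(g) for all n ≥ 1 (solved by Möbius inversion). Then Pow(f,g) := Exp(g · Log(f)) = ∏_{d≥1} ψ_d(f)^{g_d}, where the power with exponent in R is h^e := exp(e · log h). -/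
open PowerSeries

/-- The Adams operation `q ↦ q^k` on ℚ(q), computed on numerator and denominator. -/
noncomputable def psiQ (k : ℕ) (r : K) : K :=
  algebraMap (Polynomial ℚ) K (r.num.comp (Polynomial.X ^ k)) /
    algebraMap (Polynomial ℚ) K (r.denom.comp (Polynomial.X ^ k))

/-- The Adams operation on ℚ(q)[[x]]: `ψ_k(f)(q,x) = f(q^k, x^k)` (for k ≥ 1). -/
noncomputable def adamsPS (k : ℕ) (f : PowerSeries K) : PowerSeries K :=
  PowerSeries.mk fun n =>
    if k ∣ n then psiQ k (PowerSeries.coeff (n / k) f) else 0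

/-- Formal exponential of a power series with zero constant term, written coefficientwise. -/
noncomputable def pexp (f : PowerSeries K) : PowerSeries K :=
  PowerSeries.mk fun n =>
    ∑ k ∈ Finset.range (n + 1), ((k.factorial : K))⁻¹ * PowerSeries.coeff n (f ^ k)

/-- Formal logarithm of a power series with constant term one, written coefficientwise. -/
noncomputable def plog (f : PowerSeries K) : PowerSeries K :=
  PowerSeries.mk fun n =>
    ∑ k ∈ Finset.Icc 1 n, (-1 : K) ^ (k + 1) * (k : K)⁻¹ * PowerSeries.coeff n ((f - 1) ^ k)

/-- The plethystic exponential `Exp(f) = exp(∑_{k≥1} ψ_k(f)/k)` for f ∈ m. -/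
noncomputable def pExp (f : PowerSeries K) : PowerSeries K :=
  pexp (PowerSeries.mk fun n =>
    ∑ k ∈ n.divisors, (k : K)⁻¹ * psiQ k (PowerSeries.coeff (n / k) f))

/-- The plethystic logarithm `Log(f) = ∑_{k≥1} (μ(k)/k) ψ_k(log f)` for f ∈ 1 + m. -/
noncomputable def pLog (f : PowerSeries K) : PowerSeries K :=
  PowerSeries.mk fun n =>
    ∑ k ∈ n.divisors,
      (algebraMap ℚ K ((ArithmeticFunction.moebius k : ℚ) / k)) *
        psiQ k (PowerSeries.coeff (n / k) (plog f))

/-- The power `h^e = exp(e · log h)` for `h ∈ 1 + m` and an arbitrary exponent `e ∈ R`. -/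
noncomputable def pPow (h e : PowerSeries K) : PowerSeries K := pexp (e * plog h)

/-- The infinite product `∏_{d≥1} F d`, for factors with `F d ∈ 1 + x^d·R`, written
coefficientwise: the coefficient of x^n only involves the factors with d ≤ n. -/
noncomputable def infProd (F : ℕ → PowerSeries K) : PowerSeries K :=
  PowerSeries.mk fun n => PowerSeries.coeff n (∏ d ∈ Finset.Icc 1 n, F d)


lemma charZeroK : CharZero K :=
  charZero_of_injective_algebraMap (algebraMap ℚ K).injective

lemma algebraMap_ratCast (x : ℚ) : algebraMap ℚ K x = (x : K) := eq_ratCast _ x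
noncomputable def phiP (k : ℕ) : Polynomial ℚ →+* K :=
  (algebraMap (Polynomial ℚ) K).comp ((Polynomial.aeval (Polynomial.X ^ k : Polynomial ℚ)).toRingHom)
lemma phiP_apply (k : ℕ) (p : Polynomial ℚ) :
    phiP k p = algebraMap (Polynomial ℚ) K (p.comp (Polynomial.X ^ k)) := by
  simp only [phiP, RingHom.coe_comp, Function.comp_apply, AlgHom.toRingHom_eq_coe,
    RingHom.coe_coe]
  rw [Polynomial.aeval_def, Polynomial.algebraMap_eq]
  rfl
lemma phiP_inj (k : ℕ) (hk : k ≠ 0) : Function.Injective (phiP k) := by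
  rw [injective_iff_map_eq_zero]
  intro p hp
  rw [phiP_apply] at hp
  have h2 : p.comp (Polynomial.X ^ k) = 0 :=
    IsFractionRing.injective (Polynomial ℚ) K (by simpa using hp)
  rcases Polynomial.comp_eq_zero_iff.mp h2 with h | ⟨_, h⟩
  · exact h
  · exfalso
    have hxk : (Polynomial.X : Polynomial ℚ) ^ k ≠ 0 :=
      pow_ne_zero k Polynomial.X_ne_zero
    apply hxk
    rw [h]
    simp [Polynomial.coeff_X_pow, hk.symm, Ne.symm hk]
noncomputable def psiHom (k : ℕ) (hk : k ≠ 0) : K →+* K :=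
  IsFractionRing.lift (phiP_inj k hk)
lemma psiQ_eq (k : ℕ) (hk : k ≠ 0) (r : K) : psiQ k r = psiHom k hk r := by
  have hr : r = algebraMap (Polynomial ℚ) K r.num / algebraMap (Polynomial ℚ) K r.denom :=
    (RatFunc.num_div_denom r).symm
  rw [psiQ]
  conv_rhs => rw [hr]
  rw [map_div₀]
  simp only [psiHom, IsFractionRing.lift_algebraMap, phiP_apply]
lemma psiQ_add (k : ℕ) (hk : k ≠ 0) (a b : K) : psiQ k (a + b) = psiQ k a + psiQ k b := by
  rw [psiQ_eq k hk, psiQ_eq k hk, psiQ_eq k hk, map_add]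
lemma psiQ_mul (k : ℕ) (hk : k ≠ 0) (a b : K) : psiQ k (a * b) = psiQ k a * psiQ k b := by
  rw [psiQ_eq k hk, psiQ_eq k hk, psiQ_eq k hk, map_mul]
lemma psiQ_one (k : ℕ) (hk : k ≠ 0) : psiQ k 1 = 1 := by
  rw [psiQ_eq k hk, map_one]
lemma psiQ_zero (k : ℕ) (hk : k ≠ 0) : psiQ k 0 = 0 := by
  rw [psiQ_eq k hk, map_zero]
lemma psiQ_ratCast (k : ℕ) (hk : k ≠ 0) (q : ℚ) : psiQ k (q : K) = (q : K) := by
  rw [psiQ_eq k hk, map_ratCast]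
lemma psiQ_natCast (k : ℕ) (hk : k ≠ 0) (n : ℕ) : psiQ k (n : K) = (n : K) := by
  rw [psiQ_eq k hk, map_natCast]
lemma psiQ_inv (k : ℕ) (hk : k ≠ 0) (a : K) : psiQ k a⁻¹ = (psiQ k a)⁻¹ := by
  rw [psiQ_eq k hk, psiQ_eq k hk, map_inv₀]
lemma psiQ_neg (k : ℕ) (hk : k ≠ 0) (a : K) : psiQ k (-a) = -psiQ k a := by
  rw [psiQ_eq k hk, psiQ_eq k hk, map_neg]
lemma psiQ_sum (k : ℕ) (hk : k ≠ 0) {ι : Type*} (s : Finset ι) (f : ι → K) :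
    psiQ k (∑ i ∈ s, f i) = ∑ i ∈ s, psiQ k (f i) := by
  simp only [psiQ_eq k hk, map_sum]
lemma psiQ_psiQ (k j : ℕ) (hk : k ≠ 0) (hj : j ≠ 0) (r : K) :
    psiQ k (psiQ j r) = psiQ (k * j) r := by
  rw [psiQ_eq j hj, psiQ_eq k hk, psiQ_eq (k * j) (mul_ne_zero hk hj), ← RingHom.comp_apply]
  have : (psiHom k hk).comp (psiHom j hj) = psiHom (k * j) (mul_ne_zero hk hj) := by
    apply IsLocalization.ringHom_ext (nonZeroDivisors (Polynomial ℚ))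
    ext p <;>
      simp only [RingHom.comp_apply, psiHom, IsFractionRing.lift_algebraMap, phiP_apply,
        IsFractionRing.lift_algebraMap] <;>
      congr 1 <;>
      simp [Polynomial.comp_assoc, Polynomial.pow_comp, Polynomial.X_comp, ← pow_mul,
        mul_comm j k]
  rw [this]
lemma coeff_adamsPS (k n : ℕ) (f : PowerSeries K) :
    PowerSeries.coeff n (adamsPS k f) =
      if k ∣ n then psiQ k (PowerSeries.coeff (n / k) f) else 0 := by
  rw [adamsPS, PowerSeries.coeff_mk]
lemma ndiv_ne_zero {k n : ℕ} (h : k ∣ n) (hn : n ≠ 0) : n / k ≠ 0 :=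
  fun hnk => hn (by rw [← Nat.div_mul_cancel h, hnk, zero_mul])
lemma adamsPS_one (k : ℕ) (hk : k ≠ 0) : adamsPS k 1 = 1 := by
  ext n
  rw [coeff_adamsPS]
  simp only [PowerSeries.coeff_one]
  by_cases h : k ∣ n
  · rcases eq_or_ne n 0 with rfl | hn
    · simp [psiQ_one k hk]
    · rw [if_pos h, if_neg hn, if_neg (ndiv_ne_zero h hn), psiQ_zero k hk]
  · rw [if_neg h, if_neg (fun hn0 : n = 0 => h (hn0 ▸ dvd_zero k))]
lemma adamsPS_C (k : ℕ) (hk : k ≠ 0) (c : K) :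
    adamsPS k (PowerSeries.C c) = PowerSeries.C (psiQ k c) := by
  ext n
  rw [coeff_adamsPS]
  simp only [PowerSeries.coeff_C]
  by_cases h : k ∣ n
  · rcases eq_or_ne n 0 with rfl | hn
    · simp
    · rw [if_pos h, if_neg hn, if_neg (ndiv_ne_zero h hn), psiQ_zero k hk]
  · rw [if_neg h, if_neg (fun hn0 : n = 0 => h (hn0 ▸ dvd_zero k))]
lemma adamsPS_add (k : ℕ) (hk : k ≠ 0) (a b : PowerSeries K) :
    adamsPS k (a + b) = adamsPS k a + adamsPS k b := by
  ext n
  simp only [coeff_adamsPS, map_add]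
  by_cases h : k ∣ n
  · simp [h, psiQ_add k hk]
  · simp [h]
lemma adamsPS_mul (k : ℕ) (hk : k ≠ 0) (a b : PowerSeries K) :
    adamsPS k (a * b) = adamsPS k a * adamsPS k b := by
  have hkpos := Nat.pos_of_ne_zero hk
  ext n
  have hL : PowerSeries.coeff n (adamsPS k (a * b)) =
      if k ∣ n then ∑ p ∈ Finset.HasAntidiagonal.antidiagonal (n / k),
        psiQ k (PowerSeries.coeff p.1 a) * psiQ k (PowerSeries.coeff p.2 b) else 0 := by
    rw [coeff_adamsPS]
    by_cases h : k ∣ n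
    · rw [if_pos h, if_pos h, PowerSeries.coeff_mul, psiQ_sum k hk]
      exact Finset.sum_congr rfl fun p _ => psiQ_mul k hk _ _
    · rw [if_neg h, if_neg h]
  rw [hL, PowerSeries.coeff_mul]
  have hrhs : ∀ p ∈ Finset.HasAntidiagonal.antidiagonal n,
      PowerSeries.coeff p.1 (adamsPS k a) * PowerSeries.coeff p.2 (adamsPS k b) =
        if k ∣ p.1 ∧ k ∣ p.2 then
          psiQ k (PowerSeries.coeff (p.1 / k) a) * psiQ k (PowerSeries.coeff (p.2 / k) b)
          else 0 := by
    intro p _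
    rw [coeff_adamsPS, coeff_adamsPS, ite_zero_mul_ite_zero]
  rw [Finset.sum_congr rfl hrhs]
  by_cases h : k ∣ n
  · rw [if_pos h]
    obtain ⟨m, rfl⟩ := h
    rw [Nat.mul_div_cancel_left m hkpos, ← Finset.sum_filter]
    apply Finset.sum_nbij' (i := fun q => (k * q.1, k * q.2)) (j := fun p => (p.1 / k, p.2 / k))
    · intro q hq
      rw [Finset.HasAntidiagonal.mem_antidiagonal] at hq
      simp only [Finset.mem_filter, Finset.HasAntidiagonal.mem_antidiagonal]
      exact ⟨by rw [← Nat.mul_add, hq], ⟨q.1, rfl⟩, ⟨q.2, rfl⟩⟩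
    · intro p hp
      simp only [Finset.mem_filter, Finset.HasAntidiagonal.mem_antidiagonal] at hp
      obtain ⟨hpn, ⟨x, hx⟩, ⟨y, hy⟩⟩ := hp
      simp only [Finset.HasAntidiagonal.mem_antidiagonal, hx, hy, Nat.mul_div_cancel_left _ hkpos]
      refine Nat.eq_of_mul_eq_mul_left hkpos ?_
      rw [Nat.mul_add, ← hx, ← hy]
      exact hpn
    · intro q hq
      simp [Nat.mul_div_cancel_left _ hkpos]
    · intro p hp
      simp only [Finset.mem_filter, Finset.HasAntidiagonal.mem_antidiagonal] at hp
      obtain ⟨_, ⟨x, hx⟩, ⟨y, hy⟩⟩ := hp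
      have e1 : p.1 / k = x := by rw [hx, Nat.mul_div_cancel_left _ hkpos]
      have e2 : p.2 / k = y := by rw [hy, Nat.mul_div_cancel_left _ hkpos]
      simp [e1, e2, ← hx, ← hy]
    · intro q hq
      simp [Nat.mul_div_cancel_left _ hkpos]
  · rw [if_neg h]
    symm
    apply Finset.sum_eq_zero
    intro p hp
    rw [Finset.HasAntidiagonal.mem_antidiagonal] at hp
    rw [if_neg]
    rintro ⟨h1, h2⟩
    exact h (hp ▸ Nat.dvd_add h1 h2)
lemma adamsPS_adamsPS (k j : ℕ) (hk : k ≠ 0) (hj : j ≠ 0) (f : PowerSeries K) :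
    adamsPS k (adamsPS j f) = adamsPS (k * j) f := by
  ext n
  simp only [coeff_adamsPS]
  by_cases h : k ∣ n
  · rw [if_pos h]
    by_cases h2 : j ∣ n / k
    · have hdvd : k * j ∣ n := by
        obtain ⟨a, ha⟩ := h
        obtain ⟨b, hb⟩ := h2
        rw [ha, Nat.mul_div_cancel_left _ (Nat.pos_of_ne_zero hk)] at hb
        exact ⟨b, by rw [ha, hb, mul_assoc]⟩
      rw [if_pos h2, if_pos hdvd, psiQ_psiQ k j hk hj, Nat.div_div_eq_div_mul]
    · rw [if_neg h2, psiQ_zero k hk, if_neg]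
      intro hkj
      exact h2 (Nat.dvd_div_of_mul_dvd hkj)
  · rw [if_neg h, if_neg fun hkj => h (dvd_trans (Dvd.intro j rfl) hkj)]
lemma coeff_pexp (n : ℕ) (f : PowerSeries K) :
    PowerSeries.coeff n (pexp f) =
      ∑ k ∈ Finset.range (n + 1), ((k.factorial : K))⁻¹ * PowerSeries.coeff n (f ^ k) := by
  rw [pexp, PowerSeries.coeff_mk]
lemma coeff_pow_eq_zero {a : PowerSeries K} (ha : PowerSeries.constantCoeff a = 0)
    {i p : ℕ} (hpi : p < i) : PowerSeries.coeff p (a ^ i) = 0 := by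
  have : (PowerSeries.X : PowerSeries K) ^ i ∣ a ^ i :=
    pow_dvd_pow_of_dvd (PowerSeries.X_dvd_iff.mpr ha) i
  exact PowerSeries.X_pow_dvd_iff.mp this p hpi
lemma coeff_mul_pow_eq_zero {a b : PowerSeries K} (ha : PowerSeries.constantCoeff a = 0)
    (hb : PowerSeries.constantCoeff b = 0) {i j p : ℕ} (hp : p < i + j) :
    PowerSeries.coeff p (a ^ i * b ^ j) = 0 := by
  have : (PowerSeries.X : PowerSeries K) ^ (i + j) ∣ a ^ i * b ^ j := by
    rw [pow_add]
    exact mul_dvd_mul (pow_dvd_pow_of_dvd (PowerSeries.X_dvd_iff.mpr ha) i)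
      (pow_dvd_pow_of_dvd (PowerSeries.X_dvd_iff.mpr hb) j)
  exact PowerSeries.X_pow_dvd_iff.mp this p hp
lemma pexp_zero : pexp 0 = 1 := by
  ext n
  rw [coeff_pexp]
  rcases eq_or_ne n 0 with rfl | hn
  · simp
  · rw [PowerSeries.coeff_one, if_neg hn]
    apply Finset.sum_eq_zero
    intro k _
    rcases eq_or_ne k 0 with rfl | hk
    · simp [PowerSeries.coeff_one, hn]
    · rw [zero_pow hk, map_zero, mul_zero]
lemma pexp_mul (a b : PowerSeries K) (ha : PowerSeries.constantCoeff a = 0)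
    (hb : PowerSeries.constantCoeff b = 0) :
    pexp (a + b) = pexp a * pexp b := by
  haveI := charZeroK
  ext n
  set G : ℕ → ℕ → K := fun i j =>
    (i.factorial : K)⁻¹ * ((j.factorial : K)⁻¹ * PowerSeries.coeff n (a ^ i * b ^ j))
    with hGdef
  have hRHS : PowerSeries.coeff n (pexp a * pexp b) =
      ∑ i ∈ Finset.range (n + 1), ∑ j ∈ Finset.range (n + 1), G i j := by
    rw [PowerSeries.coeff_mul]
    have hext : ∀ p ∈ Finset.HasAntidiagonal.antidiagonal n,
        PowerSeries.coeff p.1 (pexp a) * PowerSeries.coeff p.2 (pexp b) =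
          (∑ i ∈ Finset.range (n + 1), (i.factorial : K)⁻¹ * PowerSeries.coeff p.1 (a ^ i)) *
          (∑ j ∈ Finset.range (n + 1), (j.factorial : K)⁻¹ * PowerSeries.coeff p.2 (b ^ j)) := by
      intro p hp
      rw [Finset.HasAntidiagonal.mem_antidiagonal] at hp
      rw [coeff_pexp, coeff_pexp]
      congr 1
      · apply Finset.sum_subset
        · apply Finset.range_subset_range.mpr; omega
        · intro i _ hi
          rw [Finset.mem_range, not_lt] at hi
          rw [coeff_pow_eq_zero ha (by omega), mul_zero]
      · apply Finset.sum_subset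
        · apply Finset.range_subset_range.mpr; omega
        · intro j _ hj
          rw [Finset.mem_range, not_lt] at hj
          rw [coeff_pow_eq_zero hb (by omega), mul_zero]
    rw [Finset.sum_congr rfl hext]
    have hexp : ∀ p ∈ Finset.HasAntidiagonal.antidiagonal n,
        (∑ i ∈ Finset.range (n + 1), (i.factorial : K)⁻¹ * PowerSeries.coeff p.1 (a ^ i)) *
          (∑ j ∈ Finset.range (n + 1), (j.factorial : K)⁻¹ * PowerSeries.coeff p.2 (b ^ j)) =
        ∑ i ∈ Finset.range (n + 1), ∑ j ∈ Finset.range (n + 1),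
          ((i.factorial : K)⁻¹ * (j.factorial : K)⁻¹) *
            (PowerSeries.coeff p.1 (a ^ i) * PowerSeries.coeff p.2 (b ^ j)) := by
      intro p _
      rw [Finset.sum_mul_sum]
      apply Finset.sum_congr rfl; intro i _
      apply Finset.sum_congr rfl; intro j _
      ring
    rw [Finset.sum_congr rfl hexp, Finset.sum_comm]
    apply Finset.sum_congr rfl; intro i _
    rw [Finset.sum_comm]
    apply Finset.sum_congr rfl; intro j _
    rw [← Finset.mul_sum, ← PowerSeries.coeff_mul, hGdef, mul_assoc]
  have hLHS : PowerSeries.coeff n (pexp (a + b)) =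
      ∑ i ∈ Finset.range (n + 1), ∑ j ∈ Finset.range (n + 1), G i j := by
    rw [coeff_pexp]
    have step1 : ∀ k ∈ Finset.range (n + 1),
        (k.factorial : K)⁻¹ * PowerSeries.coeff n ((a + b) ^ k) =
          ∑ i ∈ Finset.range (k + 1), G i (k - i) := by
      intro k _
      rw [add_pow, map_sum, Finset.mul_sum]
      apply Finset.sum_congr rfl
      intro i hi
      rw [Finset.mem_range] at hi
      rw [(map_natCast (PowerSeries.C (R := K)) (k.choose i)).symm, PowerSeries.coeff_mul_C]
      have hfact : (k.factorial : K)⁻¹ * (k.choose i : K) =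
          (i.factorial : K)⁻¹ * (((k - i).factorial : K))⁻¹ := by
        have h1 : (k.choose i : K) * (i.factorial : K) * ((k - i).factorial : K)
            = (k.factorial : K) := by
          exact_mod_cast congrArg (Nat.cast : ℕ → K)
            (Nat.choose_mul_factorial_mul_factorial (by omega))
        have hi0 : (i.factorial : K) ≠ 0 := Nat.cast_ne_zero.mpr (Nat.factorial_ne_zero i)
        have hk0 : (k.factorial : K) ≠ 0 := Nat.cast_ne_zero.mpr (Nat.factorial_ne_zero k)
        have hki0 : ((k - i).factorial : K) ≠ 0 :=
          Nat.cast_ne_zero.mpr (Nat.factorial_ne_zero (k - i))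
        field_simp
        rw [← h1]
      rw [mul_comm (PowerSeries.coeff n (a ^ i * b ^ (k - i))) _, ← mul_assoc, hfact, hGdef]
      ring
    rw [Finset.sum_congr rfl step1, Finset.sum_sigma']
    have hbij : ∑ x ∈ (Finset.range (n + 1)).sigma (fun k => Finset.range (k + 1)),
        G x.2 (x.1 - x.2) =
        ∑ p ∈ (Finset.range (n + 1) ×ˢ Finset.range (n + 1)).filter
          (fun p => p.1 + p.2 ≤ n), G p.1 p.2 := by
      apply Finset.sum_nbij' (i := fun x => (x.2, x.1 - x.2))
        (j := fun p => ⟨p.1 + p.2, p.1⟩)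
      · intro x hx
        simp only [Finset.mem_sigma, Finset.mem_range] at hx
        simp only [Finset.mem_filter, Finset.mem_product, Finset.mem_range]
        omega
      · intro p hp
        simp only [Finset.mem_filter, Finset.mem_product, Finset.mem_range] at hp
        simp only [Finset.mem_sigma, Finset.mem_range]
        omega
      · intro x hx
        simp only [Finset.mem_sigma, Finset.mem_range] at hx
        simp only []
        congr 1 <;> omega
      · intro p hp
        simp
      · intro x hx
        simp only [Finset.mem_sigma, Finset.mem_range] at hx
        rfl
    rw [hbij, Finset.sum_filter, ← Finset.sum_product']
    apply Finset.sum_congr rfl; intro p _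
    split_ifs with h
    · rfl
    · symm
      rw [hGdef]
      simp only []
      rw [coeff_mul_pow_eq_zero ha hb (by omega), mul_zero, mul_zero]
  rw [hLHS, hRHS]
lemma psiQ_pow (k : ℕ) (hk : k ≠ 0) (a : K) (m : ℕ) : psiQ k (a ^ m) = psiQ k a ^ m := by
  simp only [psiQ_eq k hk, map_pow]
lemma adamsPS_neg (k : ℕ) (hk : k ≠ 0) (a : PowerSeries K) :
    adamsPS k (-a) = -adamsPS k a := by
  ext n
  simp only [coeff_adamsPS, map_neg]
  by_cases h : k ∣ n
  · simp [h, psiQ_neg k hk]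
  · simp [h]
lemma adamsPS_sub (k : ℕ) (hk : k ≠ 0) (a b : PowerSeries K) :
    adamsPS k (a - b) = adamsPS k a - adamsPS k b := by
  rw [sub_eq_add_neg, sub_eq_add_neg, adamsPS_add k hk, adamsPS_neg k hk]
lemma adamsPS_pow (k : ℕ) (hk : k ≠ 0) (a : PowerSeries K) (m : ℕ) :
    adamsPS k (a ^ m) = adamsPS k a ^ m := by
  induction m with
  | zero => simpa using adamsPS_one k hk
  | succ m ih => rw [pow_succ, pow_succ, adamsPS_mul k hk, ih]
lemma coeff_plog (n : ℕ) (f : PowerSeries K) :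
    PowerSeries.coeff n (plog f) =
      ∑ k ∈ Finset.Icc 1 n, (-1 : K) ^ (k + 1) * (k : K)⁻¹ *
        PowerSeries.coeff n ((f - 1) ^ k) := by
  rw [plog, PowerSeries.coeff_mk]
lemma constantCoeff_plog (f : PowerSeries K) : PowerSeries.coeff 0 (plog f) = 0 := by
  rw [coeff_plog]
  simp
lemma psiQ_sign (k : ℕ) (hk : k ≠ 0) (j : ℕ) :
    psiQ k ((-1 : K) ^ (j + 1) * (j : K)⁻¹) = (-1 : K) ^ (j + 1) * (j : K)⁻¹ := by
  rw [psiQ_mul k hk, psiQ_pow k hk, psiQ_neg k hk, psiQ_one k hk, psiQ_inv k hk,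
    psiQ_natCast k hk]
lemma adams_plog (k : ℕ) (hk : k ≠ 0) (f : PowerSeries K)
    (hf : PowerSeries.constantCoeff f = 1) :
    plog (adamsPS k f) = adamsPS k (plog f) := by
  have hf1 : PowerSeries.constantCoeff (f - 1) = 0 := by
    rw [map_sub, hf, map_one, sub_self]
  ext n
  rw [coeff_plog, coeff_adamsPS]
  have hterm : ∀ j ∈ Finset.Icc 1 n,
      (-1 : K) ^ (j + 1) * (j : K)⁻¹ * PowerSeries.coeff n ((adamsPS k f - 1) ^ j) =
        if k ∣ n then (-1 : K) ^ (j + 1) * (j : K)⁻¹ *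
          psiQ k (PowerSeries.coeff (n / k) ((f - 1) ^ j)) else 0 := by
    intro j _
    have : adamsPS k f - 1 = adamsPS k (f - 1) := by
      rw [adamsPS_sub k hk, adamsPS_one k hk]
    rw [this, ← adamsPS_pow k hk, coeff_adamsPS]
    by_cases h : k ∣ n
    · rw [if_pos h, if_pos h]
    · rw [if_neg h, if_neg h, mul_zero]
  rw [Finset.sum_congr rfl hterm]
  by_cases h : k ∣ n
  · simp only [if_pos h]
    rw [coeff_plog, psiQ_sum k hk]
    have hterm2 : ∀ j ∈ Finset.Icc 1 (n / k),
        psiQ k ((-1 : K) ^ (j + 1) * (j : K)⁻¹ * PowerSeries.coeff (n / k) ((f - 1) ^ j)) =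
          (-1 : K) ^ (j + 1) * (j : K)⁻¹ *
            psiQ k (PowerSeries.coeff (n / k) ((f - 1) ^ j)) := by
      intro j _
      rw [psiQ_mul k hk, psiQ_sign k hk]
    rw [Finset.sum_congr rfl hterm2]
    symm
    apply Finset.sum_subset
    · apply Finset.Icc_subset_Icc_right
      exact Nat.div_le_self n k
    · intro j hj hj2
      rw [Finset.mem_Icc] at hj hj2
      push_neg at hj2
      have : n / k < j := by omega
      rw [coeff_pow_eq_zero hf1 this, psiQ_zero k hk, mul_zero]
  · simp only [if_neg h]
    exact Finset.sum_eq_zero fun j _ => rfl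
lemma prod_pexp (s : Finset ℕ) (e : ℕ → PowerSeries K)
    (h : ∀ d ∈ s, PowerSeries.constantCoeff (e d) = 0) :
    ∏ d ∈ s, pexp (e d) = pexp (∑ d ∈ s, e d) := by
  induction s using Finset.cons_induction with
  | empty => simp [pexp_zero]
  | cons a s ha ih =>
    rw [Finset.prod_cons, Finset.sum_cons,
      ih (fun d hd => h d (Finset.mem_cons_of_mem hd)), ← pexp_mul]
    · exact h a (Finset.mem_cons_self a s)
    · rw [map_sum]
      exact Finset.sum_eq_zero fun d hd => h d (Finset.mem_cons_of_mem hd)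
def CoeffEq (n : ℕ) (A B : PowerSeries K) : Prop :=
  ∀ m ≤ n, PowerSeries.coeff m A = PowerSeries.coeff m B
lemma ceq_refl (n : ℕ) (A : PowerSeries K) : CoeffEq n A A := fun _ _ => rfl
lemma ceq_mul {n : ℕ} {A A' B B' : PowerSeries K} (h1 : CoeffEq n A A')
    (h2 : CoeffEq n B B') : CoeffEq n (A * B) (A' * B') := by
  intro m hm
  rw [PowerSeries.coeff_mul, PowerSeries.coeff_mul]
  apply Finset.sum_congr rfl
  intro p hp
  rw [Finset.HasAntidiagonal.mem_antidiagonal] at hp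
  rw [h1 p.1 (by omega), h2 p.2 (by omega)]
lemma ceq_pow {n : ℕ} {A B : PowerSeries K} (h : CoeffEq n A B) (k : ℕ) :
    CoeffEq n (A ^ k) (B ^ k) := by
  induction k with
  | zero => simpa using ceq_refl n 1
  | succ k ih =>
    rw [pow_succ, pow_succ]
    exact ceq_mul ih h
lemma ceq_pexp {n : ℕ} {A B : PowerSeries K} (h : CoeffEq n A B) :
    PowerSeries.coeff n (pexp A) = PowerSeries.coeff n (pexp B) := by
  rw [coeff_pexp, coeff_pexp]
  exact Finset.sum_congr rfl fun k _ => by rw [ceq_pow h k n le_rfl]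
lemma ceq_adams {n k : ℕ} (hk : k ≠ 0) {A B : PowerSeries K} (h : CoeffEq n A B) :
    CoeffEq n (adamsPS k A) (adamsPS k B) := by
  intro m hm
  rw [coeff_adamsPS, coeff_adamsPS]
  by_cases hd : k ∣ m
  · rw [if_pos hd, if_pos hd, h (m / k) (le_trans (Nat.div_le_self m k) hm)]
  · rw [if_neg hd, if_neg hd]
lemma vanish1 {L : PowerSeries K} (hL : PowerSeries.constantCoeff L = 0)
    {s m : ℕ} (hms : m < s) (h : PowerSeries K) :
    PowerSeries.coeff m (h * adamsPS s L) = 0 := by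
  rw [PowerSeries.coeff_mul]
  apply Finset.sum_eq_zero
  intro p hp
  rw [Finset.HasAntidiagonal.mem_antidiagonal] at hp
  have hp2 : p.2 < s := by omega
  rw [coeff_adamsPS]
  by_cases hd : s ∣ p.2
  · have hz : p.2 = 0 := Nat.eq_zero_of_dvd_of_lt hd hp2
    rw [if_pos hd, hz, Nat.zero_div, PowerSeries.coeff_zero_eq_constantCoeff_apply, hL,
      psiQ_zero s (by omega), mul_zero]
  · rw [if_neg hd, mul_zero]
lemma vanish2 {g L : PowerSeries K} (hL : PowerSeries.constantCoeff L = 0)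
    {k s m : ℕ} (hk : k ∣ s) (hkm : ¬k ∣ m) :
    PowerSeries.coeff m (adamsPS k g * adamsPS s L) = 0 := by
  rw [PowerSeries.coeff_mul]
  apply Finset.sum_eq_zero
  intro p hp
  rw [Finset.HasAntidiagonal.mem_antidiagonal] at hp
  rw [coeff_adamsPS, coeff_adamsPS]
  by_cases h1 : k ∣ p.1
  · by_cases h2 : s ∣ p.2
    · exact absurd (hp ▸ Nat.dvd_add h1 (dvd_trans hk h2)) hkm
    · rw [if_neg h2, mul_zero]
  · rw [if_neg h1, zero_mul]
lemma adamsPS_zero (k : ℕ) (hk : k ≠ 0) : adamsPS k 0 = 0 := by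
  ext n
  rw [coeff_adamsPS]
  by_cases h : k ∣ n
  · rw [if_pos h, map_zero, psiQ_zero k hk, map_zero]
  · rw [if_neg h, map_zero]
lemma adamsPS_sum (k : ℕ) (hk : k ≠ 0) {ι : Type*} (s : Finset ι) (F : ι → PowerSeries K) :
    adamsPS k (∑ i ∈ s, F i) = ∑ i ∈ s, adamsPS k (F i) := by
  induction s using Finset.cons_induction with
  | empty => simpa using adamsPS_zero k hk
  | cons a s ha ih => rw [Finset.sum_cons, Finset.sum_cons, adamsPS_add k hk, ih]
lemma constantCoeff_plog' (f : PowerSeries K) :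
    PowerSeries.constantCoeff (plog f) = 0 := by
  rw [← PowerSeries.coeff_zero_eq_constantCoeff_apply]
  exact constantCoeff_plog f
lemma constantCoeff_adams_plog (d : ℕ) (hd : d ≠ 0) (L : PowerSeries K)
    (hL : PowerSeries.constantCoeff L = 0) :
    PowerSeries.constantCoeff (adamsPS d L) = 0 := by
  rw [← PowerSeries.coeff_zero_eq_constantCoeff_apply, coeff_adamsPS, if_pos (dvd_zero d),
    Nat.zero_div, PowerSeries.coeff_zero_eq_constantCoeff_apply, hL, psiQ_zero d hd]
lemma moebius_gd (g : PowerSeries K) (gd : ℕ → PowerSeries K)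
    (hgd : ∀ n : ℕ, 1 ≤ n → ∑ d ∈ n.divisors, (d : PowerSeries K) * gd d = adamsPS n g)
    (s : ℕ) (hs : s ≠ 0) :
    ∑ k ∈ s.divisors, (ArithmeticFunction.moebius (s / k)) • adamsPS k g
      = (s : PowerSeries K) * gd s := by
  have H := (ArithmeticFunction.sum_eq_iff_sum_smul_moebius_eq
    (f := fun d => (d : PowerSeries K) * gd d) (g := fun n => adamsPS n g)).mp
    (fun n hn => hgd n hn) s (Nat.pos_of_ne_zero hs)
  rw [Nat.sum_divisorsAntidiagonal'
    (f := fun x y => (ArithmeticFunction.moebius x) • adamsPS y g)] at H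
  exact H
lemma pLog_ceq (f : PowerSeries K) (N : ℕ) :
    CoeffEq N (pLog f)
      (∑ j ∈ Finset.Icc 1 N, PowerSeries.C
          (algebraMap ℚ K ((ArithmeticFunction.moebius j : ℚ) / j)) *
        adamsPS j (plog f)) := by
  intro r hr
  rw [pLog, PowerSeries.coeff_mk, map_sum]
  have hRterm : ∀ j ∈ Finset.Icc 1 N,
      PowerSeries.coeff r (PowerSeries.C
          (algebraMap ℚ K ((ArithmeticFunction.moebius j : ℚ) / j)) * adamsPS j (plog f)) =
        (algebraMap ℚ K ((ArithmeticFunction.moebius j : ℚ) / j)) *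
          PowerSeries.coeff r (adamsPS j (plog f)) := by
    intro j _
    rw [PowerSeries.coeff_C_mul]
  rw [Finset.sum_congr rfl hRterm]
  rcases eq_or_ne r 0 with rfl | hr0
  · rw [Nat.divisors_zero, Finset.sum_empty]
    symm
    apply Finset.sum_eq_zero
    intro j hj
    have hj0 : j ≠ 0 := by rw [Finset.mem_Icc] at hj; omega
    rw [coeff_adamsPS, if_pos (dvd_zero j), Nat.zero_div, constantCoeff_plog,
      psiQ_zero j hj0, mul_zero]
  · have hLterm : ∀ j ∈ r.divisors,
        (algebraMap ℚ K ((ArithmeticFunction.moebius j : ℚ) / j)) *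
          psiQ j (PowerSeries.coeff (r / j) (plog f)) =
        (algebraMap ℚ K ((ArithmeticFunction.moebius j : ℚ) / j)) *
          PowerSeries.coeff r (adamsPS j (plog f)) := by
      intro j hj
      rw [coeff_adamsPS, if_pos (Nat.dvd_of_mem_divisors hj)]
    refine Eq.trans (Finset.sum_congr rfl hLterm) ?_
    apply Finset.sum_subset
    · intro j hj
      rw [Finset.mem_Icc]
      exact ⟨Nat.pos_of_mem_divisors hj, le_trans (Nat.divisor_le hj) hr⟩
    · intro j _ hj2
      have : ¬j ∣ r := fun hd => hj2 (Nat.mem_divisors.mpr ⟨hd, hr0⟩)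
      rw [coeff_adamsPS, if_neg this, mul_zero]
lemma main_coeff (f g : PowerSeries K) (hf : PowerSeries.constantCoeff f = 1)
    (gd : ℕ → PowerSeries K)
    (hgd : ∀ n : ℕ, 1 ≤ n → ∑ d ∈ n.divisors, (d : PowerSeries K) * gd d = adamsPS n g)
    (m : ℕ) (hm : 1 ≤ m) :
    PowerSeries.coeff m (PowerSeries.mk fun n =>
      ∑ k ∈ n.divisors, (k : K)⁻¹ * psiQ k (PowerSeries.coeff (n / k) (g * pLog f))) =
    ∑ d ∈ Finset.Icc 1 m, PowerSeries.coeff m (gd d * adamsPS d (plog f)) := by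
  have hm0 : m ≠ 0 := by omega
  set L := plog f with hLdef
  have hL0 : PowerSeries.constantCoeff L = 0 := constantCoeff_plog' f
  set Cf : ℕ → K := fun j => algebraMap ℚ K ((ArithmeticFunction.moebius j : ℚ) / j) with hCf
  set F : ℕ → ℕ → K := fun k s =>
    PowerSeries.coeff m (adamsPS k g * adamsPS s L) with hF
  -- Step 1
  have hstep1 : PowerSeries.coeff m (PowerSeries.mk fun n =>
      ∑ k ∈ n.divisors, (k : K)⁻¹ * psiQ k (PowerSeries.coeff (n / k) (g * pLog f))) =
      ∑ k ∈ m.divisors, ∑ j ∈ Finset.Icc 1 m, (k : K)⁻¹ * (Cf j * F k (k * j)) := by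
    rw [PowerSeries.coeff_mk]
    apply Finset.sum_congr rfl
    intro k hk
    have hk0 : k ≠ 0 := (Nat.pos_of_mem_divisors hk).ne'
    have hkdvd : k ∣ m := Nat.dvd_of_mem_divisors hk
    have e1 : psiQ k (PowerSeries.coeff (m / k) (g * pLog f)) =
        PowerSeries.coeff m (adamsPS k (g * pLog f)) := by
      rw [coeff_adamsPS, if_pos hkdvd]
    have e2 : PowerSeries.coeff m (adamsPS k (g * pLog f)) =
        PowerSeries.coeff m (adamsPS k (g * ∑ j ∈ Finset.Icc 1 m, PowerSeries.C (Cf j) *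
          adamsPS j L)) :=
      (ceq_adams hk0 (ceq_mul (ceq_refl m g) (pLog_ceq f m))) m le_rfl
    have e3 : adamsPS k (∑ j ∈ Finset.Icc 1 m, PowerSeries.C (Cf j) * adamsPS j L) =
        ∑ j ∈ Finset.Icc 1 m, PowerSeries.C (Cf j) * adamsPS (k * j) L := by
      rw [adamsPS_sum k hk0]
      apply Finset.sum_congr rfl
      intro j hj
      have hj0 : j ≠ 0 := by rw [Finset.mem_Icc] at hj; omega
      rw [adamsPS_mul k hk0, adamsPS_C k hk0, adamsPS_adamsPS k j hk0 hj0]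
      have : psiQ k (Cf j) = Cf j := by
        rw [hCf]
        simp only []
        rw [algebraMap_ratCast, psiQ_ratCast k hk0]
      rw [this]
    rw [e1, e2, adamsPS_mul k hk0, e3, Finset.mul_sum, map_sum, Finset.mul_sum]
    apply Finset.sum_congr rfl
    intro j hj
    rw [mul_left_comm (adamsPS k g), PowerSeries.coeff_C_mul]
  rw [hstep1]
  -- Step E1 : reindex inner sum
  have E1 : ∀ k ∈ m.divisors,
      ∑ j ∈ Finset.Icc 1 m, (k : K)⁻¹ * (Cf j * F k (k * j)) =
      ∑ s ∈ Finset.Icc 1 m, if k ∣ s then (k : K)⁻¹ * (Cf (s / k) * F k s) else 0 := by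
    intro k hk
    have hkpos : 0 < k := Nat.pos_of_mem_divisors hk
    rw [← Finset.sum_filter]
    rw [← Finset.sum_subset (Finset.Icc_subset_Icc_right (Nat.div_le_self m k))
      (by
        intro j hj hj2
        rw [Finset.mem_Icc] at hj hj2
        have hjgt : m / k < j := by omega
        have hlt : m < k * j := by
          rw [mul_comm]
          exact (Nat.div_lt_iff_lt_mul hkpos).mp hjgt
        rw [hF]
        simp only []
        rw [vanish1 hL0 hlt, mul_zero, mul_zero])]
    apply Finset.sum_nbij' (i := fun j => k * j) (j := fun s => s / k)
    · intro j hj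
      rw [Finset.mem_Icc] at hj
      simp only [Finset.mem_filter, Finset.mem_Icc]
      refine ⟨⟨Nat.mul_pos hkpos hj.1, ?_⟩, Dvd.intro j rfl⟩
      calc k * j ≤ k * (m / k) := Nat.mul_le_mul_left k hj.2
        _ = m / k * k := mul_comm _ _
        _ ≤ m := Nat.div_mul_le_self m k
    · intro s hs
      simp only [Finset.mem_filter, Finset.mem_Icc] at hs
      obtain ⟨⟨hs1, hsm⟩, hds⟩ := hs
      rw [Finset.mem_Icc]
      exact ⟨(Nat.one_le_div_iff hkpos).mpr (Nat.le_of_dvd (by omega) hds),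
        Nat.div_le_div_right hsm⟩
    · intro j hj
      exact Nat.mul_div_cancel_left j hkpos
    · intro s hs
      simp only [Finset.mem_filter, Finset.mem_Icc] at hs
      exact Nat.mul_div_cancel' hs.2
    · intro j hj
      rw [Nat.mul_div_cancel_left j hkpos]
  rw [Finset.sum_congr rfl E1]
  -- Step E2 : enlarge outer sum
  rw [Finset.sum_subset (Finset.subset_iff.mpr (fun {k} hk => Finset.mem_Icc.mpr
      ⟨Nat.pos_of_mem_divisors hk, Nat.divisor_le hk⟩))
    (by
      intro k hk hk2
      have hkm : ¬k ∣ m := fun hd => hk2 (Nat.mem_divisors.mpr ⟨hd, hm0⟩)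
      apply Finset.sum_eq_zero
      intro s hs
      split_ifs with hd
      · rw [hF]
        simp only []
        rw [vanish2 hL0 hd hkm, mul_zero, mul_zero]
      · rfl)]
  -- Step E3 : swap
  rw [Finset.sum_comm]
  -- Step E4 + F : per s
  apply Finset.sum_congr rfl
  intro s hs
  rw [Finset.mem_Icc] at hs
  have hs0 : s ≠ 0 := by omega
  haveI := charZeroK
  have hsK : (s : K) ≠ 0 := Nat.cast_ne_zero.mpr hs0
  rw [← Finset.sum_filter]
  have hfe : Finset.filter (fun k => k ∣ s) (Finset.Icc 1 m) = s.divisors := by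
    ext k
    simp only [Finset.mem_filter, Finset.mem_Icc, Nat.mem_divisors]
    constructor
    · rintro ⟨_, hd⟩; exact ⟨hd, hs0⟩
    · rintro ⟨hd, _⟩
      have hk1 : 1 ≤ k := Nat.pos_of_dvd_of_pos hd (by omega)
      exact ⟨⟨hk1, le_trans (Nat.le_of_dvd (by omega) hd) hs.2⟩, hd⟩
  rw [hfe]
  have hterm : ∀ k ∈ s.divisors,
      (k : K)⁻¹ * (Cf (s / k) * F k s) =
        (s : K)⁻¹ * PowerSeries.coeff m
          (((ArithmeticFunction.moebius (s / k)) • adamsPS k g) * adamsPS s L) := by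
    intro k hk
    have hkd : k ∣ s := Nat.dvd_of_mem_divisors hk
    have hkpos : 0 < k := Nat.pos_of_mem_divisors hk
    have hdk1 : 1 ≤ s / k := (Nat.one_le_div_iff hkpos).mpr (Nat.le_of_dvd (by omega) hkd)
    have hck : (k : K) * ((s / k : ℕ) : K) = (s : K) := by
      rw [← Nat.cast_mul, Nat.mul_div_cancel' hkd]
    have hkK : (k : K) ≠ 0 := Nat.cast_ne_zero.mpr (by omega)
    have hdkK : ((s / k : ℕ) : K) ≠ 0 := Nat.cast_ne_zero.mpr (by omega)
    have hCfe : Cf (s / k) = ((ArithmeticFunction.moebius (s / k) : ℤ) : K) *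
        (((s / k : ℕ) : K))⁻¹ := by
      rw [hCf]
      simp only []
      rw [algebraMap_ratCast]
      push_cast
      rw [div_eq_mul_inv]
    have hsm : PowerSeries.coeff m
        (((ArithmeticFunction.moebius (s / k)) • adamsPS k g) * adamsPS s L) =
        ((ArithmeticFunction.moebius (s / k) : ℤ) : K) * F k s := by
      rw [smul_mul_assoc, map_zsmul, zsmul_eq_mul, hF]
    rw [hsm, hCfe]
    have hsinv : (s : K)⁻¹ = (k : K)⁻¹ * (((s / k : ℕ) : K))⁻¹ := by
      rw [← mul_inv, hck]
    rw [hsinv]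
    ring
  rw [Finset.sum_congr rfl hterm, ← Finset.mul_sum, ← map_sum, ← Finset.sum_mul,
    moebius_gd g gd hgd s hs0]
  have : ((s : PowerSeries K) * gd s) * adamsPS s L =
      PowerSeries.C (s : K) * (gd s * adamsPS s L) := by
    rw [← map_natCast (PowerSeries.C (R := K)) s, mul_assoc]
  rw [this, PowerSeries.coeff_C_mul, inv_mul_cancel_left₀ hsK]

/-- Let `f ∈ 1 + m`, `g ∈ R = ℚ(q)[[x]]`, and let `g_d ∈ R` (d ≥ 1) satisfy
`∑_{d|n} d·g_d = ψ_n(g)` for all n ≥ 1. Then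
`Pow(f,g) := Exp(g·Log(f)) = ∏_{d≥1} ψ_d(f)^{g_d}`. -/
theorem pPow_eq_prod_adams (f g : PowerSeries K) (hf : PowerSeries.constantCoeff f = 1)
    (gd : ℕ → PowerSeries K)
    (hgd : ∀ n : ℕ, 1 ≤ n → ∑ d ∈ n.divisors, (d : PowerSeries K) * gd d = adamsPS n g) :
    pExp (g * pLog f) = infProd (fun d => pPow (adamsPS d f) (gd d)) := by

  have hL0 : PowerSeries.constantCoeff (plog f) = 0 := constantCoeff_plog' f
  ext n
  rw [infProd, PowerSeries.coeff_mk]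
  have hprod : ∏ d ∈ Finset.Icc 1 n, pPow (adamsPS d f) (gd d) =
      pexp (∑ d ∈ Finset.Icc 1 n, gd d * plog (adamsPS d f)) := by
    rw [← prod_pexp]
    · exact Finset.prod_congr rfl fun d _ => rfl
    · intro d hd
      rw [map_mul, constantCoeff_plog', mul_zero]
  rw [hprod, pExp]
  apply ceq_pexp
  intro m hm
  rw [map_sum]
  have hpl : ∀ d ∈ Finset.Icc 1 n,
      PowerSeries.coeff m (gd d * plog (adamsPS d f)) =
        PowerSeries.coeff m (gd d * adamsPS d (plog f)) := by
    intro d hd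
    have hd0 : d ≠ 0 := by rw [Finset.mem_Icc] at hd; omega
    rw [adams_plog d hd0 f hf]
  rw [Finset.sum_congr rfl hpl]
  rcases eq_or_ne m 0 with rfl | hm0
  · rw [PowerSeries.coeff_mk, Nat.divisors_zero, Finset.sum_empty]
    symm
    apply Finset.sum_eq_zero
    intro d hd
    have hd0 : d ≠ 0 := by rw [Finset.mem_Icc] at hd; omega
    rw [PowerSeries.coeff_zero_eq_constantCoeff_apply, map_mul,
      constantCoeff_adams_plog d hd0 _ hL0, mul_zero]
  · rw [main_coeff f g hf gd hgd m (by omega)]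
    apply Finset.sum_subset
    · exact Finset.Icc_subset_Icc_right hm
    · intro d hd hd2
      rw [Finset.mem_Icc] at hd hd2
      exact vanish1 hL0 (by omega) (gd d)
end

section
/- Define f_d(q) ∈ ℚ(q) for d ≥ 1 by f_1 = q^m and, via the generating-function relation, suppose ∑_{d≥1} f_d(q) x^d = a(q) satisfies Exp((a(q) − x)/(1−q))|_{q=1} = 1 − m x (evaluation at q = 1 well-defined). Then for all d ≥ 2, f_d(q)/(q−1) evaluated at q = 1 equals (1/d)∑_{k|d} μ(d/k) m^k. -/
open PowerSeries

/-- Evaluation of a rational function at q = 1 (meaningful when the denominator does not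
vanish at 1). -/
noncomputable def ev1 (r : K) : ℚ := r.num.eval 1 / r.denom.eval 1
/-- regularity at q = 1 -/
def Reg (r : K) : Prop := r.denom.eval 1 ≠ 0

lemma eval₂_id (p : Polynomial ℚ) : Polynomial.eval₂ (RingHom.id ℚ) 1 p = p.eval 1 := rfl

lemma ev1_eq_eval (r : K) : ev1 r = RatFunc.eval (RingHom.id ℚ) 1 r := by
  simp [ev1, RatFunc.eval, eval₂_id]

lemma dvd_eval_ne {a b : Polynomial ℚ} (h : a ∣ b) (hb : b.eval 1 ≠ 0) : a.eval 1 ≠ 0 := by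
  obtain ⟨c, rfl⟩ := h
  simp only [Polynomial.eval_mul, ne_eq, mul_eq_zero] at hb
  exact fun h0 => hb (Or.inl h0)

lemma reg_algebraMap (p : Polynomial ℚ) : Reg (algebraMap (Polynomial ℚ) K p) := by
  simp [Reg, RatFunc.denom_algebraMap]

lemma reg_zero : Reg 0 := by
  simpa using reg_algebraMap 0

lemma reg_one : Reg 1 := by
  simpa using reg_algebraMap 1

lemma reg_add {x y : K} (hx : Reg x) (hy : Reg y) : Reg (x + y) :=
  dvd_eval_ne (RatFunc.denom_add_dvd x y) (by simp [Polynomial.eval_mul]; exact ⟨hx, hy⟩)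

lemma reg_mul {x y : K} (hx : Reg x) (hy : Reg y) : Reg (x * y) :=
  dvd_eval_ne (RatFunc.denom_mul_dvd x y) (by simp [Polynomial.eval_mul]; exact ⟨hx, hy⟩)

lemma reg_neg {x : K} (hx : Reg x) : Reg (-x) := by
  have : -x = algebraMap (Polynomial ℚ) K (-1) * x := by simp
  rw [this]; exact reg_mul (reg_algebraMap _) hx

lemma reg_sub {x y : K} (hx : Reg x) (hy : Reg y) : Reg (x - y) := by
  rw [sub_eq_add_neg]; exact reg_add hx (reg_neg hy)

lemma reg_sum {ι : Type*} {s : Finset ι} {F : ι → K} (h : ∀ i ∈ s, Reg (F i)) : Reg (∑ i ∈ s, F i) := by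
  classical
  induction s using Finset.induction_on with
  | empty => simpa using reg_zero
  | insert a s hx ih =>
    rw [Finset.sum_insert hx]
    exact reg_add (h _ (Finset.mem_insert_self _ _))
      (ih fun i hi => h i (Finset.mem_insert_of_mem hi))

lemma evalden {x : K} (hx : Reg x) : Polynomial.eval₂ (RingHom.id ℚ) 1 x.denom ≠ 0 := by
  rw [eval₂_id]; exact hx

lemma ev1_add {x y : K} (hx : Reg x) (hy : Reg y) : ev1 (x + y) = ev1 x + ev1 y := by
  simp only [ev1_eq_eval]
  exact RatFunc.eval_add (f := RingHom.id ℚ) (a := (1:ℚ)) (evalden hx) (evalden hy)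

lemma ev1_mul {x y : K} (hx : Reg x) (hy : Reg y) : ev1 (x * y) = ev1 x * ev1 y := by
  simp only [ev1_eq_eval]
  exact RatFunc.eval_mul (f := RingHom.id ℚ) (a := (1:ℚ)) (evalden hx) (evalden hy)

lemma ev1_algebraMap (p : Polynomial ℚ) : ev1 (algebraMap (Polynomial ℚ) K p) = p.eval 1 := by
  rw [ev1_eq_eval, RatFunc.eval_algebraMap]
  simp [eval₂_id]

lemma ev1_zero : ev1 0 = 0 := by simpa using ev1_algebraMap 0

lemma ev1_one : ev1 1 = 1 := by simpa using ev1_algebraMap 1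

lemma ev1_neg {x : K} (hx : Reg x) : ev1 (-x) = -ev1 x := by
  have : -x = algebraMap (Polynomial ℚ) K (-1) * x := by simp
  rw [this, ev1_mul (reg_algebraMap _) hx, ev1_algebraMap]; simp

lemma ev1_sub {x y : K} (hx : Reg x) (hy : Reg y) : ev1 (x - y) = ev1 x - ev1 y := by
  rw [sub_eq_add_neg, ev1_add hx (reg_neg hy), ev1_neg hy, sub_eq_add_neg]

lemma ev1_sum {ι : Type*} {s : Finset ι} {F : ι → K} (h : ∀ i ∈ s, Reg (F i)) :
    ev1 (∑ i ∈ s, F i) = ∑ i ∈ s, ev1 (F i) := by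
  classical
  induction s using Finset.induction_on with
  | empty => simpa using ev1_zero
  | insert a s hx ih =>
    rw [Finset.sum_insert hx, Finset.sum_insert hx,
      ev1_add (h _ (Finset.mem_insert_self _ _))
        (reg_sum fun i hi => h i (Finset.mem_insert_of_mem hi)),
      ih fun i hi => h i (Finset.mem_insert_of_mem hi)]
lemma comp_pow_ne_zero {p : Polynomial ℚ} (hp : p ≠ 0) {k : ℕ} (hk : k ≠ 0) :
    p.comp (Polynomial.X ^ k) ≠ 0 := by
  have hdeg : (Polynomial.X ^ k : Polynomial ℚ).natDegree ≠ 0 := by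
    simpa [Polynomial.natDegree_X_pow] using hk
  have := Polynomial.leadingCoeff_comp (p := p) (q := Polynomial.X ^ k) hdeg
  intro h0
  rw [h0] at this
  simp only [Polynomial.leadingCoeff_zero] at this
  have hlc : p.leadingCoeff ≠ 0 := Polynomial.leadingCoeff_ne_zero.mpr hp
  have hlc2 : (Polynomial.X ^ k : Polynomial ℚ).leadingCoeff = 1 := by
    simp [Polynomial.leadingCoeff_X_pow]
  rw [hlc2, one_pow, mul_one] at this
  exact hlc this.symm

lemma aMap_injective : Function.Injective (algebraMap (Polynomial ℚ) K) :=
  IsFractionRing.injective _ _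

lemma psi1 {p s : Polynomial ℚ} (hs : s ≠ 0) {k : ℕ} (hk : k ≠ 0) :
    psiQ k (algebraMap (Polynomial ℚ) K p / algebraMap (Polynomial ℚ) K s) =
      algebraMap (Polynomial ℚ) K (p.comp (Polynomial.X ^ k)) /
        algebraMap (Polynomial ℚ) K (s.comp (Polynomial.X ^ k)) := by
  set r : K := algebraMap (Polynomial ℚ) K p / algebraMap (Polynomial ℚ) K s with hr
  have hden : r.denom ≠ 0 := r.denom_ne_zero
  have hcross : r.num * s = p * r.denom := by
    apply aMap_injective
    have h1 : algebraMap (Polynomial ℚ) K r.num / algebraMap (Polynomial ℚ) K r.denom =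
        algebraMap (Polynomial ℚ) K p / algebraMap (Polynomial ℚ) K s := by
      rw [RatFunc.num_div_denom r]
    rw [div_eq_div_iff (RatFunc.algebraMap_ne_zero hden) (RatFunc.algebraMap_ne_zero hs)] at h1
    rw [map_mul, map_mul, h1]
  have hcross2 : r.num.comp (Polynomial.X ^ k) * s.comp (Polynomial.X ^ k) =
      p.comp (Polynomial.X ^ k) * r.denom.comp (Polynomial.X ^ k) := by
    have := congrArg (fun t => Polynomial.comp t (Polynomial.X ^ k)) hcross
    simpa [Polynomial.mul_comp] using this
  rw [psiQ, div_eq_div_iff (RatFunc.algebraMap_ne_zero (comp_pow_ne_zero hden hk))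
    (RatFunc.algebraMap_ne_zero (comp_pow_ne_zero hs hk)), ← map_mul, ← map_mul, hcross2]

lemma psiQ_one_s19 (r : K) : psiQ 1 r = r := by
  rw [psiQ, pow_one, Polynomial.comp_X, Polynomial.comp_X, RatFunc.num_div_denom]

lemma reg_div {p s : Polynomial ℚ} (hs : s.eval 1 ≠ 0) :
    Reg (algebraMap (Polynomial ℚ) K p / algebraMap (Polynomial ℚ) K s) ∧
      ev1 (algebraMap (Polynomial ℚ) K p / algebraMap (Polynomial ℚ) K s) =
        p.eval 1 / s.eval 1 := by
  have hs0 : s ≠ 0 := fun h => hs (by simp [h])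
  have hreg : Reg (algebraMap (Polynomial ℚ) K p / algebraMap (Polynomial ℚ) K s) :=
    dvd_eval_ne (RatFunc.denom_div_dvd p s) hs
  refine ⟨hreg, ?_⟩
  have hmul : (algebraMap (Polynomial ℚ) K p / algebraMap (Polynomial ℚ) K s) *
      algebraMap (Polynomial ℚ) K s = algebraMap (Polynomial ℚ) K p :=
    div_mul_cancel₀ _ (RatFunc.algebraMap_ne_zero hs0)
  have := congrArg ev1 hmul
  rw [ev1_mul hreg (reg_algebraMap s), ev1_algebraMap, ev1_algebraMap] at this
  field_simp at this ⊢
  linarith [this]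

lemma eval_comp_pow (p : Polynomial ℚ) (k : ℕ) :
    (p.comp (Polynomial.X ^ k)).eval 1 = p.eval 1 := by
  rw [Polynomial.eval_comp]; simp

lemma reg_psiQ {r : K} (hr : Reg r) (k : ℕ) :
    Reg (psiQ k r) ∧ ev1 (psiQ k r) = ev1 r := by
  have h1 : (r.denom.comp (Polynomial.X ^ k)).eval 1 ≠ 0 := by
    rw [eval_comp_pow]; exact hr
  have := reg_div (p := r.num.comp (Polynomial.X ^ k)) h1
  rw [← psiQ] at this
  refine ⟨this.1, ?_⟩
  rw [this.2, eval_comp_pow, eval_comp_pow]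
  rfl
section PS
variable {R : Type*} [CommRing R]

lemma coeff_pow_eq_zero_s19 {f : PowerSeries R} (h : PowerSeries.constantCoeff f = 0) :
    ∀ {k n : ℕ}, n < k → PowerSeries.coeff n (f ^ k) = 0 := by
  intro k
  induction k with
  | zero => intro n hn; omega
  | succ k ih =>
    intro n hn
    rw [pow_succ', PowerSeries.coeff_mul]
    apply Finset.sum_eq_zero
    intro p hp
    rw [Finset.HasAntidiagonal.mem_antidiagonal] at hp
    rcases Nat.eq_zero_or_pos p.1 with h0 | h0
    · rw [h0, PowerSeries.coeff_zero_eq_constantCoeff, h, zero_mul]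
    · rw [ih (by omega), mul_zero]

lemma coeff_zero_pow_eq_zero {f : PowerSeries R} (h : PowerSeries.constantCoeff f = 0)
    {k : ℕ} (hk : 1 ≤ k) : PowerSeries.coeff 0 (f ^ k) = 0 := by
  rw [PowerSeries.coeff_zero_eq_constantCoeff, map_pow, h, zero_pow (by omega)]

end PS

/-- plethystic-exponential shape over ℚ -/
noncomputable def pexpQ (f : PowerSeries ℚ) : PowerSeries ℚ :=
  PowerSeries.mk fun n =>
    ∑ k ∈ Finset.range (n + 1), ((k.factorial : ℚ))⁻¹ * PowerSeries.coeff n (f ^ k)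

lemma coeff_pexpQ_eq (f : PowerSeries ℚ) (h : PowerSeries.constantCoeff f = 0)
    {n N : ℕ} (hnN : n ≤ N) :
    PowerSeries.coeff n (pexpQ f) =
      ∑ k ∈ Finset.range (N + 1), ((k.factorial : ℚ))⁻¹ * PowerSeries.coeff n (f ^ k) := by
  rw [pexpQ, PowerSeries.coeff_mk]
  apply Finset.sum_subset
  · exact Finset.range_subset_range.mpr (by omega)
  · intro k hk hk2
    rw [Finset.mem_range] at hk hk2
    rw [coeff_pow_eq_zero_s19 h (by omega), mul_zero]

open PowerSeries in
lemma deriv_pexpQ (f : PowerSeries ℚ) (h0 : PowerSeries.constantCoeff f = 0) :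
    d⁄dX ℚ (pexpQ f) = (d⁄dX ℚ f) * pexpQ f := by
  ext n
  set S : PowerSeries ℚ := ∑ k ∈ Finset.range (n + 2), ((k.factorial : ℚ))⁻¹ • f ^ k with hS
  set S' : PowerSeries ℚ := ∑ k ∈ Finset.range (n + 1), ((k.factorial : ℚ))⁻¹ • f ^ k with hS'
  have hcoeffS : ∀ j, j ≤ n + 1 → PowerSeries.coeff j (pexpQ f) = PowerSeries.coeff j S := by
    intro j hj
    rw [coeff_pexpQ_eq f h0 hj, hS, map_sum]
    apply Finset.sum_congr rfl
    intro k _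
    rw [map_smul, smul_eq_mul]
  have hcoeffS' : ∀ j, j ≤ n → PowerSeries.coeff j (pexpQ f) = PowerSeries.coeff j S' := by
    intro j hj
    rw [coeff_pexpQ_eq f h0 hj, hS', map_sum]
    apply Finset.sum_congr rfl
    intro k _
    rw [map_smul, smul_eq_mul]
  have hDS : d⁄dX ℚ S = (d⁄dX ℚ f) * S' := by
    rw [hS, map_sum]
    have hterm : ∀ k : ℕ, d⁄dX ℚ (((k.factorial : ℚ))⁻¹ • f ^ k) =
        ((k.factorial : ℚ))⁻¹ • ((k : ℚ) • (f ^ (k - 1) * d⁄dX ℚ f)) := by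
      intro k
      rw [Derivation.map_smul]
      congr 1
      rw [Derivation.leibniz_pow]
      rw [← Nat.cast_smul_eq_nsmul ℚ, smul_eq_mul (α := PowerSeries ℚ)]
    calc (∑ k ∈ Finset.range (n + 2), d⁄dX ℚ (((k.factorial : ℚ))⁻¹ • f ^ k))
        = ∑ k ∈ Finset.range (n + 2),
            ((k.factorial : ℚ))⁻¹ • ((k : ℚ) • (f ^ (k - 1) * d⁄dX ℚ f)) := by
          exact Finset.sum_congr rfl fun k _ => hterm k
      _ = ∑ k ∈ Finset.range (n + 1), ((k.factorial : ℚ))⁻¹ • (f ^ k * d⁄dX ℚ f) := by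
          rw [Finset.sum_range_succ']
          simp only [Nat.cast_zero, zero_smul, smul_zero, add_zero, Nat.add_sub_cancel]
          apply Finset.sum_congr rfl
          intro k _
          rw [smul_smul]
          congr 1
          rw [Nat.factorial_succ, Nat.cast_mul, mul_inv]
          have h1 : ((k : ℚ) + 1) ≠ 0 := by positivity
          push_cast
          field_simp
      _ = (d⁄dX ℚ f) * S' := by
          rw [hS', Finset.mul_sum]
          apply Finset.sum_congr rfl
          intro k _
          rw [mul_smul_comm]
          congr 1
          exact mul_comm _ _
  rw [PowerSeries.coeff_derivative, hcoeffS _ (le_refl _), ← PowerSeries.coeff_derivative, hDS,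
    PowerSeries.coeff_mul, PowerSeries.coeff_mul]
  apply Finset.sum_congr rfl
  intro p hp
  rw [Finset.HasAntidiagonal.mem_antidiagonal] at hp
  rw [← hcoeffS' p.2 (by omega)]
open PowerSeries in
lemma ode_coeff (m : ℕ) (G : PowerSeries ℚ) (h0 : PowerSeries.constantCoeff G = 0)
    (hG : pexpQ G = 1 - (m : ℚ) • PowerSeries.X) :
    ∀ j : ℕ, 1 ≤ j → PowerSeries.coeff j G = -((m : ℚ) ^ j) / j := by
  have hD : -((m : ℚ) • (1 : PowerSeries ℚ)) = (d⁄dX ℚ G) * (1 - (m : ℚ) • PowerSeries.X) := by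
    have h1 := deriv_pexpQ G h0
    rw [hG] at h1
    rw [← h1, map_sub, Derivation.map_smul, PowerSeries.derivative_X]
    simp
  have hcoeff : ∀ n : ℕ, PowerSeries.coeff n (d⁄dX ℚ G) = -((m : ℚ) ^ (n + 1)) := by
    intro n
    induction n with
    | zero =>
      have := congrArg (PowerSeries.coeff 0) hD
      rw [mul_sub, mul_one, mul_smul_comm, map_sub, map_neg, map_smul, map_smul,
        PowerSeries.coeff_zero_mul_X, PowerSeries.coeff_zero_eq_constantCoeff, map_one] at this
      simp only [smul_eq_mul, mul_one, mul_zero, sub_zero] at this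
      rw [PowerSeries.coeff_zero_eq_constantCoeff, ← this]
      norm_num
    | succ n ih =>
      have := congrArg (PowerSeries.coeff (n + 1)) hD
      rw [mul_sub, mul_one, mul_smul_comm, map_sub, map_neg, map_smul, map_smul,
        PowerSeries.coeff_succ_mul_X, PowerSeries.coeff_one] at this
      simp only [smul_eq_mul, Nat.succ_ne_zero, if_false, mul_zero, neg_zero, ih] at this
      have h2 : PowerSeries.coeff (n + 1) (d⁄dX ℚ G) = (m : ℚ) * -((m : ℚ) ^ (n + 1)) := by
        linarith [this]
      rw [h2]; ring
  intro j hj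
  obtain ⟨n, rfl⟩ : ∃ n, j = n + 1 := ⟨j - 1, by omega⟩
  have := hcoeff n
  rw [PowerSeries.coeff_derivative] at this
  have hn : ((n : ℚ) + 1) ≠ 0 := by positivity
  field_simp at this ⊢
  push_cast
  linarith [this]
/-- Target values: `c m d = (1/d) ∑_{k|d} μ(d/k) m^k`. -/
noncomputable def cc (m : ℕ) (d : ℕ) : ℚ :=
  ((1 : ℚ) / d) * ∑ k ∈ d.divisors, (ArithmeticFunction.moebius (d / k) : ℚ) * (m : ℚ) ^ k

lemma cc_one (m : ℕ) : cc m 1 = m := by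
  simp [cc]

lemma moebius_sum (m d : ℕ) (hd : 0 < d) :
    ∑ e ∈ d.divisors,
      (∑ j ∈ e.divisors, (ArithmeticFunction.moebius (e / j) : ℚ) * (m : ℚ) ^ j) = (m : ℚ) ^ d := by
  have key := (ArithmeticFunction.sum_eq_iff_sum_mul_moebius_eq
    (R := ℚ)
    (f := fun n => ∑ j ∈ n.divisors, (ArithmeticFunction.moebius (n / j) : ℚ) * (m : ℚ) ^ j)
    (g := fun n => (m : ℚ) ^ n)).mpr
  have h2 : ∀ n : ℕ, 0 < n →
      ∑ x ∈ n.divisorsAntidiagonal, (ArithmeticFunction.moebius x.fst : ℚ) * (m : ℚ) ^ x.snd =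
        ∑ j ∈ n.divisors, (ArithmeticFunction.moebius (n / j) : ℚ) * (m : ℚ) ^ j := by
    intro n hn
    rw [← Nat.sum_divisorsAntidiagonal' (f := fun a b => (ArithmeticFunction.moebius a : ℚ) * (m : ℚ) ^ b)]
  exact key (fun n hn => h2 n hn) d hd

lemma cc_sum (m d : ℕ) (hd : 0 < d) :
    ∑ k ∈ d.divisors, ((k : ℚ))⁻¹ * cc m (d / k) = (m : ℚ) ^ d / d := by
  have hd0 : (d : ℚ) ≠ 0 := by positivity
  have step1 : ∀ k ∈ d.divisors, ((k : ℚ))⁻¹ * cc m (d / k) =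
      (1 / (d : ℚ)) * (((d / k : ℕ) : ℚ) * cc m (d / k)) := by
    intro k hk
    rw [Nat.mem_divisors] at hk
    have hk0 : (k : ℚ) ≠ 0 := by
      have := Nat.pos_of_dvd_of_pos hk.1 hd
      positivity
    have hcast : ((d / k : ℕ) : ℚ) = (d : ℚ) / (k : ℚ) := Nat.cast_div hk.1 hk0
    rw [hcast]
    field_simp
  rw [Finset.sum_congr rfl step1, ← Finset.mul_sum]
  have step2 : ∑ k ∈ d.divisors, ((d / k : ℕ) : ℚ) * cc m (d / k) =
      ∑ e ∈ d.divisors, ((e : ℚ)) * cc m e :=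
    Nat.sum_div_divisors d (fun e => ((e : ℚ)) * cc m e)
  have step3 : ∀ e ∈ d.divisors, ((e : ℚ)) * cc m e =
      ∑ j ∈ e.divisors, (ArithmeticFunction.moebius (e / j) : ℚ) * (m : ℚ) ^ j := by
    intro e he
    rw [Nat.mem_divisors] at he
    have he0 : (e : ℚ) ≠ 0 := by
      have := Nat.pos_of_dvd_of_pos he.1 hd
      positivity
    rw [cc]
    field_simp
  rw [step2, Finset.sum_congr rfl step3, moebius_sum m d hd]
  field_simp
section KSide

variable (m : ℕ) (f : ℕ → K)

/-- The argument series of `pExp`. -/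
noncomputable def gSer : PowerSeries K :=
  ((PowerSeries.mk fun d => if d = 0 then 0 else f d) - PowerSeries.X) *
    PowerSeries.C (1 - q)⁻¹

/-- The (conjecturally regular) building blocks. -/
noncomputable def sFun : ℕ → K := fun d =>
  if d = 1 then algebraMap (Polynomial ℚ) K (∑ i ∈ Finset.range m, Polynomial.X ^ i)
  else f d / (q - 1)

/-- The coefficients of the inner series of `pExp`. -/
noncomputable def hFun : ℕ → K := fun n =>
  ∑ k ∈ n.divisors, (k : K)⁻¹ * psiQ k (PowerSeries.coeff (n / k) (gSer f))

lemma q_sub_one_ne : q - 1 ≠ 0 := by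
  have : (q - 1 : K) = algebraMap (Polynomial ℚ) K (Polynomial.X - 1) := by
    rw [map_sub, RatFunc.algebraMap_X, map_one]
  rw [this]
  exact RatFunc.algebraMap_ne_zero (Polynomial.X_sub_C_ne_zero 1)

lemma one_sub_q_ne : (1 - q : K) ≠ 0 := by
  intro h
  apply q_sub_one_ne
  rw [← neg_sub 1 q, h, neg_zero]

lemma coeff_gSer (d : ℕ) :
    PowerSeries.coeff d (gSer f) =
      ((if d = 0 then 0 else f d) - (if d = 1 then 1 else 0)) * (1 - q)⁻¹ := by
  rw [gSer, PowerSeries.coeff_mul_C, map_sub, PowerSeries.coeff_mk, PowerSeries.coeff_X]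

lemma hFun_zero : hFun f 0 = 0 := by
  simp [hFun]

lemma geom_key (hf1 : f 1 = q ^ m) :
    algebraMap (Polynomial ℚ) K (∑ i ∈ Finset.range m, Polynomial.X ^ i) * (q - 1) =
      f 1 - 1 := by
  have hgeo : (∑ i ∈ Finset.range m, (Polynomial.X : Polynomial ℚ) ^ i) *
      (Polynomial.X - 1) = Polynomial.X ^ m - 1 := geom_sum_mul Polynomial.X m
  have h2 := congrArg (algebraMap (Polynomial ℚ) K) hgeo
  rw [map_mul, map_sub, map_sub, RatFunc.algebraMap_X, map_one, map_pow,
    RatFunc.algebraMap_X] at h2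
  rw [hf1]
  exact h2

lemma coeff_gSer_eq (hf1 : f 1 = q ^ m) {d : ℕ} (hd : 1 ≤ d) :
    PowerSeries.coeff d (gSer f) = -(sFun m f d) := by
  rw [coeff_gSer]
  rcases eq_or_ne d 1 with h1 | h1
  · subst h1
    rw [if_neg (by omega), if_pos rfl, sFun, if_pos rfl]
    rw [← geom_key m f hf1]
    rw [show ((1 : K) - q) = -(q - 1) by ring, inv_neg, mul_neg, mul_assoc,
      mul_inv_cancel₀ q_sub_one_ne, mul_one]
  · rw [if_neg (by omega), if_neg h1, sFun, if_neg h1]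
    have hq := q_sub_one_ne
    have hq2 := one_sub_q_ne
    field_simp
    ring

/-- `(k : K)⁻¹` is regular with value `(k : ℚ)⁻¹`, for `k ≥ 1`. -/
lemma reg_natInv {k : ℕ} (hk : 1 ≤ k) : Reg ((k : K)⁻¹) ∧ ev1 ((k : K)⁻¹) = (k : ℚ)⁻¹ := by
  have hrepr : ((k : K))⁻¹ = algebraMap (Polynomial ℚ) K 1 /
      algebraMap (Polynomial ℚ) K (k : Polynomial ℚ) := by
    rw [map_one, map_natCast, inv_eq_one_div]
  have heval : ((k : Polynomial ℚ)).eval 1 = (k : ℚ) := by simp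
  have hne : ((k : Polynomial ℚ)).eval 1 ≠ 0 := by
    rw [heval]
    exact_mod_cast Nat.cast_ne_zero.mpr (by omega)
  have := reg_div (p := 1) hne
  rw [← hrepr] at this
  refine ⟨this.1, ?_⟩
  rw [this.2, heval, Polynomial.eval_one, inv_eq_one_div]

lemma psi_term (hf1 : f 1 = q ^ m) {d k : ℕ} (hd : 1 ≤ d) (hk : 1 ≤ k)
    (hs : Reg (sFun m f d)) :
    Reg (psiQ k (PowerSeries.coeff d (gSer f))) ∧
      ev1 (psiQ k (PowerSeries.coeff d (gSer f))) = -(ev1 (sFun m f d)) := by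
  set s := sFun m f d with hsdef
  have hrepr : -(s) = algebraMap (Polynomial ℚ) K (-(s.num)) /
      algebraMap (Polynomial ℚ) K s.denom := by
    rw [map_neg, neg_div, RatFunc.num_div_denom]
  have hcoeff : PowerSeries.coeff d (gSer f) = -(s) := coeff_gSer_eq m f hf1 hd
  have hpsi : psiQ k (PowerSeries.coeff d (gSer f)) =
      algebraMap (Polynomial ℚ) K ((-(s.num)).comp (Polynomial.X ^ k)) /
        algebraMap (Polynomial ℚ) K (s.denom.comp (Polynomial.X ^ k)) := by
    rw [hcoeff, hrepr]
    exact psi1 s.denom_ne_zero (by omega)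
  have hden : (s.denom.comp (Polynomial.X ^ k)).eval 1 ≠ 0 := by
    rw [eval_comp_pow]; exact hs
  have hdiv := reg_div (p := (-(s.num)).comp (Polynomial.X ^ k)) hden
  rw [← hpsi] at hdiv
  refine ⟨hdiv.1, ?_⟩
  rw [hdiv.2, eval_comp_pow, eval_comp_pow, Polynomial.eval_neg, neg_div]
  rfl

lemma hFun_term (hf1 : f 1 = q ^ m) {n : ℕ} (hn : 1 ≤ n) {k : ℕ} (hk : k ∈ n.divisors)
    (hs : Reg (sFun m f (n / k))) :
    Reg ((k : K)⁻¹ * psiQ k (PowerSeries.coeff (n / k) (gSer f))) ∧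
      ev1 ((k : K)⁻¹ * psiQ k (PowerSeries.coeff (n / k) (gSer f))) =
        -((k : ℚ)⁻¹ * ev1 (sFun m f (n / k))) := by
  rw [Nat.mem_divisors] at hk
  have hk1 : 1 ≤ k := Nat.pos_of_dvd_of_pos hk.1 (by omega)
  have hd1 : 1 ≤ n / k := Nat.div_pos (Nat.le_of_dvd (by omega) hk.1) hk1
  obtain ⟨hr1, he1⟩ := reg_natInv hk1
  obtain ⟨hr2, he2⟩ := psi_term m f hf1 hd1 hk1 hs
  refine ⟨reg_mul hr1 hr2, ?_⟩
  rw [ev1_mul hr1 hr2, he1, he2]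
  ring

/-- Splitting `hFun n` into the `k = 1` term and the rest. -/
lemma hFun_split (hf1 : f 1 = q ^ m) {n : ℕ} (hn : 1 ≤ n) :
    hFun f n = -(sFun m f n) +
      ∑ k ∈ n.divisors.erase 1, (k : K)⁻¹ * psiQ k (PowerSeries.coeff (n / k) (gSer f)) := by
  have h1 : (1 : ℕ) ∈ n.divisors := Nat.one_mem_divisors.mpr (by omega)
  rw [hFun, ← Finset.sum_erase_add _ _ h1]
  rw [Nat.cast_one, inv_one, one_mul, psiQ_one_s19, Nat.div_one, coeff_gSer_eq m f hf1 (by omega)]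
  ring

lemma hFun_full (hf1 : f 1 = q ^ m) {n : ℕ} (hn : 1 ≤ n)
    (hs : ∀ d, 1 ≤ d → d ∣ n → Reg (sFun m f d)) :
    Reg (hFun f n) ∧
      ev1 (hFun f n) = -∑ k ∈ n.divisors, (k : ℚ)⁻¹ * ev1 (sFun m f (n / k)) := by
  have hterm : ∀ k ∈ n.divisors,
      Reg ((k : K)⁻¹ * psiQ k (PowerSeries.coeff (n / k) (gSer f))) ∧
      ev1 ((k : K)⁻¹ * psiQ k (PowerSeries.coeff (n / k) (gSer f))) =
        -((k : ℚ)⁻¹ * ev1 (sFun m f (n / k))) := by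
    intro k hk
    have hkd := Nat.mem_divisors.mp hk
    have hk1 : 1 ≤ k := Nat.pos_of_dvd_of_pos hkd.1 (by omega)
    have hd1 : 1 ≤ n / k := Nat.div_pos (Nat.le_of_dvd (by omega) hkd.1) hk1
    exact hFun_term m f hf1 hn hk (hs _ hd1 (Nat.div_dvd_of_dvd hkd.1))
  constructor
  · rw [hFun]
    exact reg_sum fun k hk => (hterm k hk).1
  · rw [hFun, ev1_sum fun k hk => (hterm k hk).1,
      Finset.sum_congr rfl fun k hk => (hterm k hk).2]
    rw [← Finset.sum_neg_distrib]

end KSide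
section Transfer

variable (f : ℕ → K)

/-- ℚ-side image of the inner series. -/
noncomputable def GqSer : PowerSeries ℚ := PowerSeries.mk fun i => ev1 (hFun f i)

lemma coeff_GqSer (i : ℕ) : PowerSeries.coeff i (GqSer f) = ev1 (hFun f i) := by
  rw [GqSer, PowerSeries.coeff_mk]

lemma constantCoeff_GqSer : PowerSeries.constantCoeff (GqSer f) = 0 := by
  rw [← PowerSeries.coeff_zero_eq_constantCoeff, GqSer, PowerSeries.coeff_mk, hFun_zero, ev1_zero]

lemma constantCoeff_HSer : PowerSeries.constantCoeff (PowerSeries.mk (hFun f)) = 0 := by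
  rw [← PowerSeries.coeff_zero_eq_constantCoeff, PowerSeries.coeff_mk, hFun_zero]

lemma transfer (M : ℕ) (hreg : ∀ i, 1 ≤ i → i ≤ M → Reg (hFun f i)) :
    ∀ j, j ≤ M → ∀ k,
      Reg (PowerSeries.coeff j ((PowerSeries.mk (hFun f)) ^ k)) ∧
      ev1 (PowerSeries.coeff j ((PowerSeries.mk (hFun f)) ^ k)) =
        PowerSeries.coeff j ((GqSer f) ^ k) := by
  intro j
  induction j using Nat.strong_induction_on with
  | _ j ih =>
    intro hj k
    cases k with
    | zero =>
      rw [pow_zero, pow_zero, PowerSeries.coeff_one, PowerSeries.coeff_one]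
      rcases eq_or_ne j 0 with h0 | h0
      · rw [if_pos h0, if_pos h0]
        exact ⟨reg_one, ev1_one⟩
      · rw [if_neg h0, if_neg h0]
        exact ⟨reg_zero, ev1_zero⟩
    | succ k =>
      rw [pow_succ', pow_succ', PowerSeries.coeff_mul, PowerSeries.coeff_mul]
      have hterm : ∀ p ∈ Finset.HasAntidiagonal.antidiagonal j,
          Reg (PowerSeries.coeff p.1 (PowerSeries.mk (hFun f)) *
            PowerSeries.coeff p.2 ((PowerSeries.mk (hFun f)) ^ k)) ∧
          ev1 (PowerSeries.coeff p.1 (PowerSeries.mk (hFun f)) *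
            PowerSeries.coeff p.2 ((PowerSeries.mk (hFun f)) ^ k)) =
            PowerSeries.coeff p.1 (GqSer f) * PowerSeries.coeff p.2 ((GqSer f) ^ k) := by
        intro p hp
        rw [Finset.HasAntidiagonal.mem_antidiagonal] at hp
        rw [PowerSeries.coeff_mk, coeff_GqSer]
        rcases eq_or_ne p.1 0 with h0 | h0
        · rw [h0, hFun_zero, zero_mul, ev1_zero, zero_mul]
          exact ⟨reg_zero, rfl⟩
        · have hp1 : 1 ≤ p.1 := by omega
          have hp2 : p.2 < j := by omega
          obtain ⟨hr, he⟩ := ih p.2 hp2 (by omega) k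
          have hrh : Reg (hFun f p.1) := hreg p.1 hp1 (by omega)
          exact ⟨reg_mul hrh hr, by rw [ev1_mul hrh hr, he]⟩
      refine ⟨reg_sum fun p hp => (hterm p hp).1, ?_⟩
      rw [ev1_sum fun p hp => (hterm p hp).1]
      exact Finset.sum_congr rfl fun p hp => (hterm p hp).2

lemma transfer_boundary (M : ℕ) (hreg : ∀ i, 1 ≤ i → i ≤ M → Reg (hFun f i))
    {k : ℕ} (hk : 2 ≤ k) :
    Reg (PowerSeries.coeff (M + 1) ((PowerSeries.mk (hFun f)) ^ k)) ∧
    ev1 (PowerSeries.coeff (M + 1) ((PowerSeries.mk (hFun f)) ^ k)) =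
      PowerSeries.coeff (M + 1) ((GqSer f) ^ k) := by
  obtain ⟨k', rfl⟩ : ∃ k', k = k' + 1 := ⟨k - 1, by omega⟩
  have hk' : 1 ≤ k' := by omega
  rw [pow_succ', pow_succ', PowerSeries.coeff_mul, PowerSeries.coeff_mul]
  have hterm : ∀ p ∈ Finset.HasAntidiagonal.antidiagonal (M + 1),
      Reg (PowerSeries.coeff p.1 (PowerSeries.mk (hFun f)) *
        PowerSeries.coeff p.2 ((PowerSeries.mk (hFun f)) ^ k')) ∧
      ev1 (PowerSeries.coeff p.1 (PowerSeries.mk (hFun f)) *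
        PowerSeries.coeff p.2 ((PowerSeries.mk (hFun f)) ^ k')) =
        PowerSeries.coeff p.1 (GqSer f) * PowerSeries.coeff p.2 ((GqSer f) ^ k') := by
    intro p hp
    rw [Finset.HasAntidiagonal.mem_antidiagonal] at hp
    rw [PowerSeries.coeff_mk, coeff_GqSer]
    rcases eq_or_ne p.1 0 with h0 | h0
    · rw [h0, hFun_zero, zero_mul, ev1_zero, zero_mul]
      exact ⟨reg_zero, rfl⟩
    · rcases eq_or_ne p.2 0 with h20 | h20
      · rw [h20, coeff_zero_pow_eq_zero (constantCoeff_HSer f) hk',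
          coeff_zero_pow_eq_zero (constantCoeff_GqSer f) hk', mul_zero, mul_zero, ev1_zero]
        exact ⟨reg_zero, rfl⟩
      · have hp1 : 1 ≤ p.1 := by omega
        have hp1M : p.1 ≤ M := by omega
        have hp2 : p.2 ≤ M := by omega
        obtain ⟨hr, he⟩ := transfer f M hreg p.2 hp2 k'
        have hrh : Reg (hFun f p.1) := hreg p.1 hp1 hp1M
        exact ⟨reg_mul hrh hr, by rw [ev1_mul hrh hr, he]⟩
  refine ⟨reg_sum fun p hp => (hterm p hp).1, ?_⟩
  rw [ev1_sum fun p hp => (hterm p hp).1]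
  exact Finset.sum_congr rfl fun p hp => (hterm p hp).2

end Transfer
/-- let `f_d(q) ∈ ℚ(q)` (d ≥ 1) with `f_1 = q^m`, set
`a(q) = ∑_{d≥1} f_d(q) x^d`, and suppose that `Exp((a(q) - x)/(1-q))` is well defined at
q = 1 with value `1 - m x`. Then for all d ≥ 2, `f_d(q)/(q-1)` is well defined at q = 1 and
its value there is `(1/d) ∑_{k|d} μ(d/k) m^k`. -/
theorem linear_term_loop_quiver (m : ℕ) (hm : 1 ≤ m) (f : ℕ → K) (hf1 : f 1 = q ^ m)
    (E : PowerSeries K)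
    (hE : E = pExp (((PowerSeries.mk fun d => if d = 0 then 0 else f d) - PowerSeries.X) *
            PowerSeries.C (1 - q)⁻¹))
    (hwell : ∀ n : ℕ, (PowerSeries.coeff n E).denom.eval 1 ≠ 0)
    (hval : (PowerSeries.mk fun n => ev1 (PowerSeries.coeff n E))
              = 1 - (m : ℚ) • PowerSeries.X) :
    ∀ d : ℕ, 2 ≤ d →
      (f d / (q - 1)).denom.eval 1 ≠ 0 ∧
      ev1 (f d / (q - 1)) =
        ((1 : ℚ) / d) * ∑ k ∈ d.divisors,
          (ArithmeticFunction.moebius (d / k) : ℚ) * (m : ℚ) ^ k := by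
  have hg : E = pexp (PowerSeries.mk (hFun f)) := by
    rw [hE]; rfl
  have hcoeffE : ∀ n, PowerSeries.coeff n E =
      ∑ k ∈ Finset.range (n + 1),
        ((k.factorial : K))⁻¹ * PowerSeries.coeff n ((PowerSeries.mk (hFun f)) ^ k) := by
    intro n
    rw [hg, pexp, PowerSeries.coeff_mk]
  -- base case d = 1
  have hbase : Reg (sFun m f 1) ∧ ev1 (sFun m f 1) = (m : ℚ) := by
    have h1 : sFun m f 1 =
        algebraMap (Polynomial ℚ) K (∑ i ∈ Finset.range m, Polynomial.X ^ i) := by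
      rw [sFun, if_pos rfl]
    constructor
    · rw [h1]; exact reg_algebraMap _
    · rw [h1, ev1_algebraMap]
      simp [Polynomial.eval_finset_sum]
  -- Phase 1 : regularity
  have R1 : ∀ n, 1 ≤ n → Reg (sFun m f n) := by
    intro n
    induction n using Nat.strong_induction_on with
    | _ n ih =>
      intro hn
      rcases eq_or_ne n 1 with rfl | hne
      · exact hbase.1
      have hn2 : 2 ≤ n := by omega
      have hsmall : ∀ d, 1 ≤ d → d < n → Reg (sFun m f d) := fun d hd1 hdn => ih d hdn hd1
      have hregh : ∀ i, 1 ≤ i → i ≤ n - 1 → Reg (hFun f i) := by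
        intro i hi1 hiM
        refine (hFun_full m f hf1 hi1 ?_).1
        intro d hd1 hdvd
        exact hsmall d hd1 (lt_of_le_of_lt (Nat.le_of_dvd (by omega) hdvd) (by omega))
      have h1mem : (1 : ℕ) ∈ Finset.range (n + 1) := by
        rw [Finset.mem_range]; omega
      have hEn := hcoeffE n
      rw [← Finset.sum_erase_add _ _ h1mem, Nat.factorial_one, Nat.cast_one, inv_one,
        one_mul, pow_one, PowerSeries.coeff_mk] at hEn
      have hrest : Reg (∑ k ∈ (Finset.range (n + 1)).erase 1,
          ((k.factorial : K))⁻¹ * PowerSeries.coeff n ((PowerSeries.mk (hFun f)) ^ k)) := by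
        apply reg_sum
        intro k hk
        have hk1 : k ≠ 1 := Finset.ne_of_mem_erase hk
        rcases eq_or_ne k 0 with rfl | hk0
        · rw [pow_zero, PowerSeries.coeff_one, if_neg (by omega), mul_zero]
          exact reg_zero
        · have hk2 : 2 ≤ k := by omega
          have hb := transfer_boundary f (n - 1) hregh hk2
          rw [show n - 1 + 1 = n from by omega] at hb
          exact reg_mul (reg_natInv k.factorial_pos).1 hb.1
      have hregHn : Reg (hFun f n) := by
        have : hFun f n = PowerSeries.coeff n E -
            ∑ k ∈ (Finset.range (n + 1)).erase 1,
              ((k.factorial : K))⁻¹ * PowerSeries.coeff n ((PowerSeries.mk (hFun f)) ^ k) := by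
          rw [hEn]; ring
        rw [this]
        exact reg_sub (hwell n) hrest
      have hsplit := hFun_split m f hf1 (show (1:ℕ) ≤ n by omega)
      have hs_eq : sFun m f n = (∑ k ∈ n.divisors.erase 1,
          (k : K)⁻¹ * psiQ k (PowerSeries.coeff (n / k) (gSer f))) - hFun f n := by
        rw [hsplit]; ring
      rw [hs_eq]
      refine reg_sub (reg_sum ?_) hregHn
      intro k hk
      have hk1 : k ≠ 1 := Finset.ne_of_mem_erase hk
      have hkmem : k ∈ n.divisors := Finset.mem_of_mem_erase hk
      have hkd := Nat.mem_divisors.mp hkmem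
      have hkpos : 1 ≤ k := Nat.pos_of_dvd_of_pos hkd.1 (by omega)
      have hk2 : 2 ≤ k := by omega
      have hd1 : 1 ≤ n / k := Nat.div_pos (Nat.le_of_dvd (by omega) hkd.1) hkpos
      have hdn : n / k < n := Nat.div_lt_self (by omega) (by omega)
      exact (hFun_term m f hf1 (by omega) hkmem (hsmall _ hd1 hdn)).1
  -- Phase 2 : values of hFun via the ODE
  have hallh : ∀ i, 1 ≤ i → Reg (hFun f i) := by
    intro i hi
    exact (hFun_full m f hf1 hi fun d hd1 _ => R1 d hd1).1
  have hpexp : pexpQ (GqSer f) = 1 - (m : ℚ) • PowerSeries.X := by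
    rw [← hval]
    ext n
    rw [PowerSeries.coeff_mk, pexpQ, PowerSeries.coeff_mk, hcoeffE n]
    have hterm : ∀ k ∈ Finset.range (n + 1),
        Reg (((k.factorial : K))⁻¹ * PowerSeries.coeff n ((PowerSeries.mk (hFun f)) ^ k)) := by
      intro k _
      exact reg_mul (reg_natInv k.factorial_pos).1
        ((transfer f n (fun i hi1 _ => hallh i hi1) n le_rfl k).1)
    rw [ev1_sum hterm]
    symm
    apply Finset.sum_congr rfl
    intro k hk
    rw [ev1_mul (reg_natInv k.factorial_pos).1
        ((transfer f n (fun i hi1 _ => hallh i hi1) n le_rfl k).1),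
      (reg_natInv k.factorial_pos).2,
      (transfer f n (fun i hi1 _ => hallh i hi1) n le_rfl k).2]
  have hode := ode_coeff m (GqSer f) (constantCoeff_GqSer f) hpexp
  have hhval : ∀ j, 1 ≤ j → ev1 (hFun f j) = -((m : ℚ) ^ j) / j := by
    intro j hj
    rw [← coeff_GqSer]
    exact hode j hj
  -- Phase 3 : values of sFun
  have V : ∀ n, 1 ≤ n → ev1 (sFun m f n) = cc m n := by
    intro n
    induction n using Nat.strong_induction_on with
    | _ n ih =>
      intro hn
      rcases eq_or_ne n 1 with rfl | hne
      · rw [hbase.2, cc_one]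
      have hn2 : 2 ≤ n := by omega
      have hv := (hFun_full m f hf1 (show (1:ℕ) ≤ n by omega) fun d hd1 _ => R1 d hd1).2
      rw [hhval n (by omega)] at hv
      have h1mem : (1 : ℕ) ∈ n.divisors := Nat.one_mem_divisors.mpr (by omega)
      have hsum1 : ∑ k ∈ n.divisors, (k : ℚ)⁻¹ * ev1 (sFun m f (n / k)) =
          (∑ k ∈ n.divisors.erase 1, (k : ℚ)⁻¹ * cc m (n / k)) + ev1 (sFun m f n) := by
        rw [← Finset.sum_erase_add _ _ h1mem, Nat.cast_one, inv_one, one_mul, Nat.div_one]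
        congr 1
        apply Finset.sum_congr rfl
        intro k hk
        have hkmem := Finset.mem_of_mem_erase hk
        have hkd := Nat.mem_divisors.mp hkmem
        have hkpos : 1 ≤ k := Nat.pos_of_dvd_of_pos hkd.1 (show 0 < n by omega)
        have hd1 : 1 ≤ n / k := Nat.div_pos (Nat.le_of_dvd (show 0 < n by omega) hkd.1) hkpos
        have hk2 : 2 ≤ k := by
          have hne1 : k ≠ 1 := Finset.ne_of_mem_erase hk
          omega
        have hdn : n / k < n := Nat.div_lt_self (show 0 < n by omega) (show 1 < k by omega)
        rw [ih (n / k) hdn hd1]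
      have hsum2 : ∑ k ∈ n.divisors, (k : ℚ)⁻¹ * cc m (n / k) =
          (∑ k ∈ n.divisors.erase 1, (k : ℚ)⁻¹ * cc m (n / k)) + cc m n := by
        rw [← Finset.sum_erase_add _ _ h1mem, Nat.cast_one, inv_one, one_mul, Nat.div_one]
      have hcc := cc_sum m n (by omega)
      rw [hsum2] at hcc
      rw [hsum1] at hv
      have hneq : -((∑ k ∈ n.divisors.erase 1, (k : ℚ)⁻¹ * cc m (n / k)) + ev1 (sFun m f n)) =
          -((m : ℚ) ^ n) / n := hv.symm
      have : (∑ k ∈ n.divisors.erase 1, (k : ℚ)⁻¹ * cc m (n / k)) + ev1 (sFun m f n) =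
          (m : ℚ) ^ n / n := by
        have := neg_eq_iff_eq_neg.mp hneq
        rw [this]; ring
      linarith [hcc, this]
  -- conclusion
  intro d hd
  have hne : d ≠ 1 := by omega
  have hsd : sFun m f d = f d / (q - 1) := by rw [sFun, if_neg hne]
  constructor
  · have := R1 d (by omega)
    rw [hsd] at this
    exact this
  · have := V d (by omega)
    rw [hsd, cc] at this
    exact this
end
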